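/- arXiv:1511.08163 — 4 statements merged into one kernel-verified Lean document; each statement's English description precedes it below -/
import Mathlib

section
/- Let n ≥ 4 be an integer and let K_{6n} be given a red/blue edge-coloring that is (F_n, K_4)-free. If the red subgraph contains a clique of order 2n, then the vertex set of K_{6n} can be partitioned into three pairwise disjoint sets of size 2n, each of which is a red clique (i.e., the red subgraph contains a copy of 3K_{2n}). -/
open SimpleGraph

/-- The fan graph `Fₙ`: the join of a single vertex (the center, `none`) with `n`
pairwise disjoint edges (`some (i, a)` is matched with `some (i, !a)`). -/
def Fan (n : ℕ) : SimpleGraph (Option (Fin n × Bool)) where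
  Adj u v := u ≠ v ∧ (u = none ∨ v = none ∨ ∃ i a b, u = some (i, a) ∧ v = some (i, b))
  symm := ⟨by
    rintro u v ⟨h1, h2⟩
    exact ⟨h1.symm, by tauto⟩⟩
  loopless := ⟨by rintro u ⟨h1, -⟩; exact h1 rfl⟩

/-- `G` contains a subgraph isomorphic to the fan graph `Fₙ`. -/
def ContainsFan {V : Type*} (G : SimpleGraph V) (n : ℕ) : Prop :=
  ∃ f : Option (Fin n × Bool) ↪ V, ∀ u v, (Fan n).Adj u v → G.Adj (f u) (f v)

/-- `G` contains a subgraph isomorphic to `K₄`. -/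
def ContainsK4 {V : Type*} (G : SimpleGraph V) : Prop :=
  ∃ a b c d : V, G.Adj a b ∧ G.Adj a c ∧ G.Adj a d ∧ G.Adj b c ∧ G.Adj b d ∧ G.Adj c d

set_option linter.unusedSectionVars false
namespace RedThree
open Finset

variable {V : Type*} [DecidableEq V] {R : SimpleGraph V} {S T : Finset V} {v w c : V} {k n : ℕ}

/-- a red matching of size `k` inside `S`. -/
def Mch (R : SimpleGraph V) (S : Finset V) (k : ℕ) : Prop :=
  ∃ f : Fin k × Bool ↪ V, (∀ p, f p ∈ S) ∧ ∀ i, R.Adj (f (i, true)) (f (i, false))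

lemma Mch.mono (h : Mch R S k) (hST : S ⊆ T) : Mch R T k := by
  obtain ⟨f, h1, h2⟩ := h
  exact ⟨f, fun p => hST (h1 p), h2⟩

lemma Mch.ext (h : Mch R S k) (hvw : R.Adj v w) (hne : v ≠ w) (hv : v ∉ S) (hw : w ∉ S) :
    Mch R (insert v (insert w S)) (k + 1) := by
  obtain ⟨f, hf1, hf2⟩ := h
  refine ⟨⟨fun p => if hlt : (p.1 : ℕ) < k then f (⟨p.1, hlt⟩, p.2) else cond p.2 v w,
      ?_⟩, ?_, ?_⟩
  · rintro ⟨i, a⟩ ⟨j, b⟩ hh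
    dsimp at hh
    by_cases h1 : (i : ℕ) < k <;> by_cases h2 : (j : ℕ) < k
    · rw [dif_pos h1, dif_pos h2] at hh
      have h3 := f.injective hh
      rw [Prod.mk.injEq] at h3
      exact Prod.ext (Fin.ext (by simpa using congrArg Fin.val h3.1)) h3.2
    · rw [dif_pos h1, dif_neg h2] at hh
      cases b <;> simp only [Bool.cond_false, Bool.cond_true] at hh
      · exact absurd (hh ▸ hf1 _) hw
      · exact absurd (hh ▸ hf1 _) hv
    · rw [dif_neg h1, dif_pos h2] at hh
      cases a <;> simp only [Bool.cond_false, Bool.cond_true] at hh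
      · exact absurd (hh.symm ▸ hf1 _) hw
      · exact absurd (hh.symm ▸ hf1 _) hv
    · rw [dif_neg h1, dif_neg h2] at hh
      have hi := i.isLt; have hj := j.isLt
      have hij : i = j := Fin.ext (by omega)
      have hab : a = b := by
        cases a <;> cases b
        · rfl
        · exact absurd hh.symm hne
        · exact absurd hh hne
        · rfl
      exact Prod.ext hij hab
  · rintro ⟨i, a⟩
    change (if hlt : (i : ℕ) < k then f (⟨i, hlt⟩, a) else cond a v w) ∈ _
    split_ifs with h1
    · exact mem_insert_of_mem (mem_insert_of_mem (hf1 _))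
    · cases a
      · exact mem_insert_of_mem (mem_insert_self _ _)
      · exact mem_insert_self _ _
  · intro i
    change R.Adj (if hlt : (i : ℕ) < k then f (⟨i, hlt⟩, true) else cond true v w)
      (if hlt : (i : ℕ) < k then f (⟨i, hlt⟩, false) else cond false v w)
    split_ifs with h1
    · exact hf2 _
    · exact hvw

lemma mch_of_clique (hcl : R.IsClique ↑S) (h : S.card = 2 * k) : Mch R S k := by
  have hc : Fintype.card (Fin k × Bool) = Fintype.card ↥S := by
    simp [h]; ring
  let e := Fintype.equivOfCardEq hc
  refine ⟨(e.toEmbedding).trans (Function.Embedding.subtype _), fun p => (e p).2, fun i => ?_⟩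
  have hne : ((e (i, true)) : V) ≠ ((e (i, false)) : V) := by
    intro hh
    have := e.injective (Subtype.coe_injective hh)
    simpa using congrArg Prod.snd this
  exact hcl (Finset.mem_coe.mpr (e (i, true)).2) (Finset.mem_coe.mpr (e (i, false)).2) hne

lemma greedy (k : ℕ) : ∀ S : Finset V,
    (∀ x ∈ S, ∀ y ∈ S, ∀ z ∈ S, x ≠ y → x ≠ z → y ≠ z → R.Adj x y ∨ R.Adj x z ∨ R.Adj y z) →
    2 * k + 1 ≤ S.card → Mch R S k := by
  induction k with
  | zero =>
    intro S _ _
    exact ⟨⟨fun p => p.1.elim0, fun p => p.1.elim0⟩, fun p => p.1.elim0, fun i => i.elim0⟩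
  | succ k IH =>
    intro S tri hcard
    have key : ∀ a b : V, a ∈ S → b ∈ S → a ≠ b → R.Adj a b → Mch R S (k + 1) := by
      intro a b ha hb hab hadj
      have hbe : b ∈ S.erase a := mem_erase.mpr ⟨hab.symm, hb⟩
      have hcard2 : 2 * k + 1 ≤ ((S.erase a).erase b).card := by
        rw [card_erase_of_mem hbe, card_erase_of_mem ha]; omega
      have tri' : ∀ x ∈ (S.erase a).erase b, ∀ y ∈ (S.erase a).erase b,
          ∀ z ∈ (S.erase a).erase b, x ≠ y → x ≠ z → y ≠ z →
          R.Adj x y ∨ R.Adj x z ∨ R.Adj y z := by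
        intro x hx y hy z hz
        exact tri x (mem_of_mem_erase (mem_of_mem_erase hx))
          y (mem_of_mem_erase (mem_of_mem_erase hy))
          z (mem_of_mem_erase (mem_of_mem_erase hz))
      have hM := (IH _ tri' hcard2).ext hadj hab
        (fun h => (notMem_erase a _) (mem_of_mem_erase h))
        (notMem_erase b _)
      refine hM.mono ?_
      refine insert_subset ha (insert_subset hb ?_)
      exact (erase_subset _ _).trans (erase_subset _ _)
    obtain ⟨x, hx⟩ := card_pos.mp (show 0 < S.card by omega)
    have h2 : 0 < (S.erase x).card := by rw [card_erase_of_mem hx]; omega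
    obtain ⟨y, hy⟩ := card_pos.mp h2
    have h3 : 0 < ((S.erase x).erase y).card := by
      rw [card_erase_of_mem hy, card_erase_of_mem hx]; omega
    obtain ⟨z, hz⟩ := card_pos.mp h3
    have hyS : y ∈ S := mem_of_mem_erase hy
    have hzS : z ∈ S := mem_of_mem_erase (mem_of_mem_erase hz)
    have hxy : x ≠ y := ((mem_erase.mp hy).1).symm
    have hxz : x ≠ z := ((mem_erase.mp (mem_of_mem_erase hz)).1).symm
    have hyz : y ≠ z := ((mem_erase.mp hz).1).symm
    rcases tri x hx y hyS z hzS hxy hxz hyz with h | h | h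
    · exact key x y hx hyS hxy h
    · exact key x z hx hzS hxz h
    · exact key y z hyS hzS hyz h

lemma fan_of (hm : Mch R S n) (hc : c ∉ S) (hadj : ∀ x ∈ S, R.Adj c x) : ContainsFan R n := by
  obtain ⟨f, hf1, hf2⟩ := hm
  have hpair : ∀ i (a b : Bool), a ≠ b → R.Adj (f (i, a)) (f (i, b)) := by
    intro i a b hab
    cases a <;> cases b
    · exact absurd rfl hab
    · exact (hf2 i).symm
    · exact hf2 i
    · exact absurd rfl hab
  refine ⟨⟨fun o => o.elim c f, ?_⟩, ?_⟩
  · rintro (_ | p) (_ | p') hh <;> simp only [Option.elim] at hh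
    · rfl
    · exact absurd (hh ▸ hf1 p') hc
    · exact absurd (hh ▸ hf1 p) hc
    · exact congrArg some (f.injective hh)
  · rintro u v ⟨hne, hcase⟩
    rcases hcase with rfl | rfl | ⟨i, a, b, rfl, rfl⟩
    · match v with
      | none => exact absurd rfl hne
      | some p => exact hadj _ (hf1 p)
    · match u with
      | none => exact absurd rfl hne
      | some p => exact (hadj _ (hf1 p)).symm
    · exact hpair i a b (fun h => hne (by rw [h]))


lemma no_two {A : Finset V} {u : V} (hn : 4 ≤ n) (hfan : ¬ContainsFan R n)
    (hA : R.IsClique ↑A) (hAcard : A.card = 2 * n)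
    (hv : v ∉ A) (hu : u ∈ A) (hw : w ∈ A) (huw : u ≠ w)
    (h1 : R.Adj v u) (h2 : R.Adj v w) : False := by
  apply hfan
  set S := (A.erase u).erase w with hS
  have hSsub : S ⊆ A := (erase_subset _ _).trans (erase_subset _ _)
  have hScl : R.IsClique ↑S := hA.subset (Finset.coe_subset.mpr hSsub)
  have hwA : w ∈ A.erase u := mem_erase.mpr ⟨huw.symm, hw⟩
  have hScard : S.card = 2 * (n - 1) := by
    rw [hS, card_erase_of_mem hwA, card_erase_of_mem hu, hAcard]; omega
  have hvS : v ∉ S := fun h => hv (hSsub h)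
  have hM := (mch_of_clique hScl hScard).ext h2 (fun h => hv (h ▸ hw)) hvS (notMem_erase _ _)
  rw [show n - 1 + 1 = n by omega] at hM
  refine fan_of (c := u) hM ?_ ?_
  · intro h
    rcases mem_insert.mp h with h | h
    · exact hv (h ▸ hu)
    · rcases mem_insert.mp h with h | h
      · exact huw h
      · exact (notMem_erase u _) (mem_of_mem_erase h)
  · intro x hx
    rcases mem_insert.mp hx with h | h
    · exact h ▸ h1.symm
    · rcases mem_insert.mp h with h | h
      · exact h ▸ hA hu hw huw
      · exact hA hu (hSsub h) (fun he => (mem_erase.mp (mem_of_mem_erase h)).1 he.symm)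

lemma deg_bound (hfan : ¬ContainsFan R n) (S : Finset V)
    (tri : ∀ x ∈ S, ∀ y ∈ S, ∀ z ∈ S, x ≠ y → x ≠ z → y ≠ z →
      R.Adj x y ∨ R.Adj x z ∨ R.Adj y z)
    (hc : c ∉ S) (hadj : ∀ x ∈ S, R.Adj c x) : S.card ≤ 2 * n := by
  by_contra hb
  push_neg at hb
  exact hfan (fan_of (greedy n S tri (by omega)) hc hadj)

end RedThree



set_option maxHeartbeats 1000000 in
/-- If the red subgraph of an `(Fₙ, K₄)`-free coloring of `K_{6n}` (`n ≥ 4`) contains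
a clique of order `2n`, then the vertex set can be partitioned into three pairwise
disjoint red cliques of size `2n` (a red `3K_{2n}`). -/
theorem red_clique_gives_three (n : ℕ) (hn : 4 ≤ n)
    (R : SimpleGraph (Fin (6 * n)))
    (hfree : ¬ ContainsFan R n ∧ ¬ ContainsK4 Rᶜ)
    (h : ∃ K : Finset (Fin (6 * n)), K.card = 2 * n ∧ R.IsClique ↑K) :
    ∃ A1 A2 A3 : Finset (Fin (6 * n)),
      Disjoint A1 A2 ∧ Disjoint A1 A3 ∧ Disjoint A2 A3 ∧
      A1.card = 2 * n ∧ A2.card = 2 * n ∧ A3.card = 2 * n ∧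
      A1 ∪ A2 ∪ A3 = Finset.univ ∧
      R.IsClique ↑A1 ∧ R.IsClique ↑A2 ∧ R.IsClique ↑A3 := by
  classical
  obtain ⟨hfan, hK4⟩ := hfree
  obtain ⟨K, hKcard, hKcl⟩ := h
  set W : Finset (Fin (6 * n)) := Finset.univ \ K with hW
  have hWcard : W.card = 4 * n := by
    rw [hW, Finset.card_sdiff_of_subset (Finset.subset_univ K), Finset.card_univ, Fintype.card_fin,
      hKcard]
    omega
  -- a vertex outside a red 2n-clique has at most one red neighbour in it; hence
  -- any three outside vertices have a common blue neighbour inside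
  have hblue3 : ∀ A : Finset (Fin (6 * n)), R.IsClique ↑A → A.card = 2 * n →
      ∀ x y z, x ∉ A → y ∉ A → z ∉ A →
      ∃ a ∈ A, ¬R.Adj x a ∧ ¬R.Adj y a ∧ ¬R.Adj z a := by
    intro A hAcl hAcard x y z hx hy hz
    have hf : ∀ v, v ∉ A → (A.filter (fun a => R.Adj v a)).card ≤ 1 := by
      intro v hv
      refine Finset.card_le_one.mpr ?_
      intro a ha b hb
      by_contra hab
      exact RedThree.no_two hn hfan hAcl hAcard hv (Finset.mem_filter.mp ha).1
        (Finset.mem_filter.mp hb).1 hab (Finset.mem_filter.mp ha).2 (Finset.mem_filter.mp hb).2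
    have hsub : ¬ (A ⊆ A.filter (fun a => R.Adj x a) ∪ A.filter (fun a => R.Adj y a) ∪
        A.filter (fun a => R.Adj z a)) := by
      intro hsub
      have hc := Finset.card_le_card hsub
      have h1 := hf x hx
      have h2 := hf y hy
      have h3 := hf z hz
      have hu1 := Finset.card_union_le (A.filter (fun a => R.Adj x a) ∪
        A.filter (fun a => R.Adj y a)) (A.filter (fun a => R.Adj z a))
      have hu2 := Finset.card_union_le (A.filter (fun a => R.Adj x a))
        (A.filter (fun a => R.Adj y a))
      omega
    obtain ⟨a, haA, hnot⟩ := Finset.not_subset.mp hsub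
    simp only [Finset.mem_union, Finset.mem_filter, not_or, not_and] at hnot
    exact ⟨a, haA, hnot.1.1 haA, hnot.1.2 haA, hnot.2 haA⟩
  -- blue triangle-freeness inside W
  have tri : ∀ x ∈ W, ∀ y ∈ W, ∀ z ∈ W, x ≠ y → x ≠ z → y ≠ z →
      R.Adj x y ∨ R.Adj x z ∨ R.Adj y z := by
    intro x hx y hy z hz hxy hxz hyz
    by_contra hb
    push_neg at hb
    obtain ⟨h1, h2, h3⟩ := hb
    have hxK : x ∉ K := (Finset.mem_sdiff.mp hx).2
    have hyK : y ∉ K := (Finset.mem_sdiff.mp hy).2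
    have hzK : z ∉ K := (Finset.mem_sdiff.mp hz).2
    obtain ⟨a, haK, ha1, ha2, ha3⟩ := hblue3 K hKcl hKcard x y z hxK hyK hzK
    apply hK4
    refine ⟨a, x, y, z, ?_, ?_, ?_, ?_, ?_, ?_⟩ <;> rw [SimpleGraph.compl_adj]
    · exact ⟨fun hh => hxK (hh ▸ haK), fun hh => ha1 hh.symm⟩
    · exact ⟨fun hh => hyK (hh ▸ haK), fun hh => ha2 hh.symm⟩
    · exact ⟨fun hh => hzK (hh ▸ haK), fun hh => ha3 hh.symm⟩
    · exact ⟨hxy, h1⟩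
    · exact ⟨hxz, h2⟩
    · exact ⟨hyz, h3⟩
  -- main claim: W contains a red clique of size 2n
  have hA : ∃ A : Finset (Fin (6 * n)), A ⊆ W ∧ R.IsClique ↑A ∧ A.card = 2 * n := by
    by_contra hno
    push_neg at hno
    have hclbd : ∀ C : Finset (Fin (6 * n)), C ⊆ W → R.IsClique ↑C → C.card ≤ 2 * n - 1 := by
      intro C hCW hCcl
      by_contra hb
      push_neg at hb
      obtain ⟨D, hDC, hDcard⟩ := Finset.exists_subset_card_eq (show 2 * n ≤ C.card by omega)
      exact hno D (hDC.trans hCW) (hCcl.subset (Finset.coe_subset.mpr hDC)) hDcard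
    have hBcl : ∀ v ∈ W, R.IsClique ↑(W.filter (fun x => x ≠ v ∧ ¬R.Adj v x)) := by
      intro v hv x hx y hy hxy
      rw [Finset.mem_coe, Finset.mem_filter] at hx hy
      obtain ⟨hxW, hxv, hxa⟩ := hx
      obtain ⟨hyW, hyv, hya⟩ := hy
      rcases tri x hxW y hyW v hv hxy hxv hyv with hh | hh | hh
      · exact hh
      · exact absurd hh.symm hxa
      · exact absurd hh.symm hya
    have hdeg : ∀ v ∈ W, (W.filter (fun x => R.Adj v x)).card = 2 * n ∧
        (W.filter (fun x => x ≠ v ∧ ¬R.Adj v x)).card = 2 * n - 1 := by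
      intro v hv
      have hredle : (W.filter (fun x => R.Adj v x)).card ≤ 2 * n := by
        refine RedThree.deg_bound (c := v) hfan _ ?_ ?_ ?_
        · intro x hx y hy z hz
          exact tri x (Finset.filter_subset _ _ hx) y (Finset.filter_subset _ _ hy)
            z (Finset.filter_subset _ _ hz)
        · intro hvin
          exact (R.loopless.irrefl v) (Finset.mem_filter.mp hvin).2
        · intro x hx
          exact (Finset.mem_filter.mp hx).2
      have hbluele : (W.filter (fun x => x ≠ v ∧ ¬R.Adj v x)).card ≤ 2 * n - 1 :=
        hclbd _ (Finset.filter_subset _ _) (hBcl v hv)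
      have hsplit : W.filter (fun x => R.Adj v x) ∪ W.filter (fun x => x ≠ v ∧ ¬R.Adj v x)
          = W.erase v := by
        ext x
        simp only [Finset.mem_union, Finset.mem_filter, Finset.mem_erase]
        constructor
        · rintro (⟨h1, h2⟩ | ⟨h1, h2, h3⟩)
          · exact ⟨h2.ne', h1⟩
          · exact ⟨h2, h1⟩
        · rintro ⟨h1, h2⟩
          by_cases h3 : R.Adj v x
          · exact Or.inl ⟨h2, h3⟩
          · exact Or.inr ⟨h2, h1, h3⟩
      have hdisj : Disjoint (W.filter (fun x => R.Adj v x))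
          (W.filter (fun x => x ≠ v ∧ ¬R.Adj v x)) := by
        rw [Finset.disjoint_left]
        intro x hx hx'
        exact (Finset.mem_filter.mp hx').2.2 (Finset.mem_filter.mp hx).2
      have hcards : (W.filter (fun x => R.Adj v x)).card +
          (W.filter (fun x => x ≠ v ∧ ¬R.Adj v x)).card = 4 * n - 1 := by
        rw [← Finset.card_union_of_disjoint hdisj, hsplit, Finset.card_erase_of_mem hv, hWcard]
      constructor <;> omega
    obtain ⟨w, hw⟩ := Finset.card_pos.mp (show 0 < W.card by omega)
    set M := W.filter (fun x => x ≠ w ∧ ¬R.Adj w x) with hMdef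
    have hMcard : M.card = 2 * n - 1 := (hdeg w hw).2
    have hMcl : R.IsClique ↑M := hBcl w hw
    have hMW : M ⊆ W := Finset.filter_subset _ _
    obtain ⟨m, hm⟩ := Finset.card_pos.mp (show 0 < M.card by omega)
    have hmW : m ∈ W := hMW hm
    set N := W.filter (fun x => R.Adj m x) with hNdef
    have hNcard : N.card = 2 * n := (hdeg m hmW).1
    have hNW : N ⊆ W := Finset.filter_subset _ _
    have hMN : M.erase m ⊆ N := by
      intro x hx
      have hxM : x ∈ M := Finset.mem_of_mem_erase hx
      have hadj : R.Adj m x := hMcl (Finset.mem_coe.mpr hm) (Finset.mem_coe.mpr hxM)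
        (fun hh => (Finset.mem_erase.mp hx).1 hh.symm)
      exact Finset.mem_filter.mpr ⟨hMW hxM, hadj⟩
    have hMecard : (M.erase m).card = 2 * n - 2 := by
      rw [Finset.card_erase_of_mem hm]; omega
    have hsd : (N \ M.erase m).card = 2 := by
      rw [Finset.card_sdiff_of_subset hMN]; omega
    obtain ⟨p, hp, q, hq, hpq⟩ := Finset.one_lt_card.mp
      (show 1 < (N \ M.erase m).card by omega)
    have hpN : p ∈ N := (Finset.mem_sdiff.mp hp).1
    have hqN : q ∈ N := (Finset.mem_sdiff.mp hq).1
    have hmp : R.Adj m p := (Finset.mem_filter.mp hpN).2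
    have hmq : R.Adj m q := (Finset.mem_filter.mp hqN).2
    have hpW : p ∈ W := hNW hpN
    have hqW : q ∈ W := hNW hqN
    have hpM : p ∉ M := fun hh => (Finset.mem_sdiff.mp hp).2 (Finset.mem_erase.mpr ⟨hmp.ne', hh⟩)
    have hqM : q ∉ M := fun hh => (Finset.mem_sdiff.mp hq).2 (Finset.mem_erase.mpr ⟨hmq.ne', hh⟩)
    have hmN : m ∉ N := fun hh => R.loopless.irrefl m (Finset.mem_filter.mp hh).2
    have build : ∀ S : Finset (Fin (6 * n)), S ⊆ N → RedThree.Mch R S n → False := by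
      intro S hS hmch
      exact hfan (RedThree.fan_of hmch (fun hh => hmN (hS hh))
        (fun x hx => (Finset.mem_filter.mp (hS hx)).2))
    have hMecl : R.IsClique ↑(M.erase m) :=
      hMcl.subset (Finset.coe_subset.mpr (Finset.erase_subset _ _))
    have hpq_blue : ¬R.Adj p q := by
      intro hred
      apply build (insert p (insert q (M.erase m)))
      · exact Finset.insert_subset hpN (Finset.insert_subset hqN hMN)
      · have h0 := RedThree.mch_of_clique hMecl (show (M.erase m).card = 2 * (n - 1) by omega)
        have h1 := h0.ext hred hpq (fun hh => hpM (Finset.mem_of_mem_erase hh))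
          (fun hh => hqM (Finset.mem_of_mem_erase hh))
        rwa [show n - 1 + 1 = n by omega] at h1
    have hff : ∀ r ∈ M.erase m, ∀ r' ∈ M.erase m, r ≠ r' → R.Adj p r → R.Adj q r' → False := by
      intro r hr r' hr' hne h1 h2
      have hrM : r ∈ M := Finset.mem_of_mem_erase hr
      have hr'M : r' ∈ M := Finset.mem_of_mem_erase hr'
      have hBsub : ((M.erase m).erase r).erase r' ⊆ M.erase m :=
        (Finset.erase_subset _ _).trans (Finset.erase_subset _ _)
      have hr'e : r' ∈ (M.erase m).erase r := Finset.mem_erase.mpr ⟨hne.symm, hr'⟩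
      have hBcard : (((M.erase m).erase r).erase r').card = 2 * (n - 2) := by
        rw [Finset.card_erase_of_mem hr'e, Finset.card_erase_of_mem hr]; omega
      have hBcl' : R.IsClique ↑(((M.erase m).erase r).erase r') :=
        hMecl.subset (Finset.coe_subset.mpr hBsub)
      have m1 := (RedThree.mch_of_clique hBcl' hBcard).ext h2
        (fun hh => hqM (hh ▸ hr'M))
        (fun hh => hqM (Finset.mem_of_mem_erase (hBsub hh)))
        (Finset.notMem_erase _ _)
      have hpnot : p ∉ insert q (insert r' (((M.erase m).erase r).erase r')) := by
        intro hh
        rcases Finset.mem_insert.mp hh with hh | hh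
        · exact hpq hh
        · rcases Finset.mem_insert.mp hh with hh | hh
          · exact hpM (hh ▸ hr'M)
          · exact hpM (Finset.mem_of_mem_erase (hBsub hh))
      have hrnot : r ∉ insert q (insert r' (((M.erase m).erase r).erase r')) := by
        intro hh
        rcases Finset.mem_insert.mp hh with hh | hh
        · exact hqM (hh ▸ hrM)
        · rcases Finset.mem_insert.mp hh with hh | hh
          · exact hne hh
          · exact (Finset.notMem_erase r _) (Finset.mem_of_mem_erase hh)
      have m2 := m1.ext h1 (fun hh => hpM (hh ▸ hrM)) hpnot hrnot
      apply build _ ?_ (by rwa [show n - 2 + 1 + 1 = n by omega] at m2)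
      exact Finset.insert_subset hpN (Finset.insert_subset (hMN hr)
        (Finset.insert_subset hqN (Finset.insert_subset (hMN hr') (hBsub.trans hMN))))
    have hfull : ∀ x y, x ∉ M → y ∉ M → x ∈ W → y ∈ W → x ≠ y → ¬R.Adj x y → R.Adj m y →
        (∀ a ∈ M.erase m, ¬R.Adj x a) → False := by
      intro x y hxM hyM hxW hyW hxy hxyb hmy hxall
      have hyall : ∀ a ∈ M, R.Adj y a := by
        intro a haM
        by_cases ham : a = m
        · exact ham ▸ hmy.symm
        · have hae : a ∈ M.erase m := Finset.mem_erase.mpr ⟨ham, haM⟩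
          have haW : a ∈ W := hMW haM
          rcases tri x hxW y hyW a haW hxy (fun hh => hxM (hh ▸ haM))
            (fun hh => hyM (hh ▸ haM)) with hh | hh | hh
          · exact absurd hh hxyb
          · exact absurd hh (hxall a hae)
          · exact hh
      refine hno (insert y M) (Finset.insert_subset hyW hMW) ?_
        (by rw [Finset.card_insert_of_notMem hyM]; omega)
      intro u hu v hv huv
      simp only [Finset.coe_insert, Set.mem_insert_iff, Finset.mem_coe] at hu hv
      rcases hu with rfl | hu <;> rcases hv with rfl | hv
      · exact absurd rfl huv
      · exact hyall v hv
      · exact (hyall u hu).symm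
      · exact hMcl (Finset.mem_coe.mpr hu) (Finset.mem_coe.mpr hv) huv
    by_cases hP : ∃ r ∈ M.erase m, R.Adj p r
    · obtain ⟨r, hr, hpr⟩ := hP
      by_cases hQ : ∃ r' ∈ M.erase m, r' ≠ r ∧ R.Adj q r'
      · obtain ⟨r', hr', hner, hqr'⟩ := hQ
        exact hff r hr r' hr' (fun hh => hner hh.symm) hpr hqr'
      · push_neg at hQ
        by_cases hqr : R.Adj q r
        · obtain ⟨a, ha⟩ := Finset.card_pos.mp
            (show 0 < ((M.erase m).erase r).card by rw [Finset.card_erase_of_mem hr]; omega)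
          have haMe : a ∈ M.erase m := Finset.mem_of_mem_erase ha
          have hane : a ≠ r := (Finset.mem_erase.mp ha).1
          have haM : a ∈ M := Finset.mem_of_mem_erase haMe
          have haW : a ∈ W := hMW haM
          have hqa : ¬R.Adj q a := hQ a haMe hane
          have hpa : R.Adj p a := by
            rcases tri q hqW p hpW a haW (fun hh => hpq hh.symm)
              (fun hh => hqM (hh ▸ haM)) (fun hh => hpM (hh ▸ haM)) with hh | hh | hh
            · exact absurd hh (fun h2 => hpq_blue h2.symm)
            · exact absurd hh hqa
            · exact hh
          exact hff a haMe r hr hane hpa hqr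
        · have hqall : ∀ a ∈ M.erase m, ¬R.Adj q a := by
            intro a ha
            by_cases hh : a = r
            · exact hh ▸ hqr
            · exact hQ a ha hh
          exact hfull q p hqM hpM hqW hpW (fun hh => hpq hh.symm)
            (fun hh => hpq_blue hh.symm) hmp hqall
    · push_neg at hP
      exact hfull p q hpM hqM hpW hqW hpq hpq_blue hmq hP
  -- finish: W splits into A and W \ A
  obtain ⟨A, hAW, hAcl, hAcard⟩ := hA
  refine ⟨K, A, W \ A, ?_, ?_, ?_, hKcard, hAcard, ?_, ?_, hKcl, hAcl, ?_⟩
  · rw [Finset.disjoint_left]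
    intro a haK haA
    exact (Finset.mem_sdiff.mp (hAW haA)).2 haK
  · rw [Finset.disjoint_left]
    intro a haK haA
    exact (Finset.mem_sdiff.mp (Finset.mem_sdiff.mp haA).1).2 haK
  · exact Finset.disjoint_sdiff
  · rw [Finset.card_sdiff_of_subset hAW, hWcard, hAcard]; omega
  · rw [Finset.union_assoc, Finset.union_sdiff_of_subset hAW, hW]
    exact Finset.union_sdiff_of_subset (Finset.subset_univ K)
  · intro u hu v hv huv
    by_contra hb
    have huWA := Finset.mem_coe.mp hu
    have hvWA := Finset.mem_coe.mp hv
    have huW : u ∈ W := (Finset.mem_sdiff.mp huWA).1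
    have hvW : v ∈ W := (Finset.mem_sdiff.mp hvWA).1
    have huA : u ∉ A := (Finset.mem_sdiff.mp huWA).2
    have hvA : v ∉ A := (Finset.mem_sdiff.mp hvWA).2
    obtain ⟨a, haA, ha1, ha2, _⟩ := hblue3 A hAcl hAcard u v v huA hvA hvA
    have haW : a ∈ W := hAW haA
    rcases tri u huW v hvW a haW huv (fun hh => huA (hh ▸ haA))
      (fun hh => hvA (hh ▸ haA)) with hh | hh | hh
    · exact hb hh
    · exact ha1 hh
    · exact ha2 hh
end

section
/- Let n ≥ 4 be an integer and let K_{6n} be given a red/blue edge-coloring that is (F_n, K_4)-free. Then the clique number of the subgraph formed by the red edges is at least 2n − 2. -/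
open SimpleGraph

open Finset

set_option linter.unusedSectionVars false
set_option linter.unusedVariables false
set_option maxHeartbeats 1000000

namespace RedLower
variable {V : Type*} [Fintype V] [DecidableEq V]

def IsMOn (R : SimpleGraph V) (S : Finset V) (P : Finset (V × V)) : Prop :=
  (∀ p ∈ P, p.1 ∈ S ∧ p.2 ∈ S ∧ R.Adj p.1 p.2) ∧
  ∀ p ∈ P, ∀ q ∈ P, p ≠ q → p.1 ≠ q.1 ∧ p.1 ≠ q.2 ∧ p.2 ≠ q.1 ∧ p.2 ≠ q.2

def supp (P : Finset (V × V)) : Finset V := P.biUnion fun p => {p.1, p.2}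

lemma mem_supp {P : Finset (V × V)} {x : V} :
    x ∈ supp P ↔ ∃ p ∈ P, x = p.1 ∨ x = p.2 := by
  simp [supp, mem_biUnion, mem_insert, mem_singleton]

lemma IsMOn.mono {R : SimpleGraph V} {S : Finset V} {P Q : Finset (V × V)}
    (h : IsMOn R S P) (hQ : Q ⊆ P) : IsMOn R S Q :=
  ⟨fun p hp => h.1 p (hQ hp), fun p hp q hq => h.2 p (hQ hp) q (hQ hq)⟩

lemma card_supp {R : SimpleGraph V} {S : Finset V} {P : Finset (V × V)}
    (h : IsMOn R S P) : (supp P).card = 2 * P.card := by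
  rw [supp, card_biUnion]
  · rw [Finset.sum_congr rfl (fun p hp => ?_), Finset.sum_const, smul_eq_mul, mul_comm]
    have hne : p.1 ≠ p.2 := (h.1 p hp).2.2.ne
    rw [card_insert_of_notMem (by simp [hne]), card_singleton]
  · intro p hp q hq hpq
    have := h.2 p hp q hq hpq
    simp only [Finset.disjoint_left, mem_insert, mem_singleton]
    rintro a (rfl | rfl) (h1 | h1) <;> simp_all

/-- A matching of size `n` in the red neighborhood of `v` yields a fan. -/
lemma containsFan_of_matching {R : SimpleGraph V} [DecidableRel R.Adj] {n : ℕ} {v : V}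
    {P : Finset (V × V)} (h : IsMOn R (Finset.univ.filter (R.Adj v ·)) P)
    (hc : P.card = n) : ContainsFan R n := by
  classical
  have e : Fin n ≃ {x // x ∈ P} := (Fintype.equivFinOfCardEq (by simpa using hc)).symm
  set g : Option (Fin n × Bool) → V := fun o =>
    match o with
    | none => v
    | some (i, false) => ((e i : {x // x ∈ P}) : V × V).1
    | some (i, true) => ((e i : {x // x ∈ P}) : V × V).2 with hg
  have hmem : ∀ i : Fin n, ((e i : {x // x ∈ P}) : V × V) ∈ P := fun i => (e i).2
  have hadjv : ∀ i : Fin n, R.Adj v (((e i : {x // x ∈ P}) : V × V)).1 ∧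
      R.Adj v (((e i : {x // x ∈ P}) : V × V)).2 := by
    intro i
    have h1 := h.1 _ (hmem i)
    constructor
    · simpa using h1.1
    · simpa using h1.2.1
  have hadjp : ∀ i : Fin n, R.Adj (((e i : {x // x ∈ P}) : V × V)).1
      (((e i : {x // x ∈ P}) : V × V)).2 := fun i => (h.1 _ (hmem i)).2.2
  have hdistinct : ∀ i j : Fin n, i ≠ j →
      ∀ a b : Bool, g (some (i, a)) ≠ g (some (j, b)) := by
    intro i j hij a b
    have hpq : (e i : {x // x ∈ P}) ≠ e j := fun hh => hij (e.injective hh)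
    have hpq' : ((e i : {x // x ∈ P}) : V × V) ≠ ((e j : {x // x ∈ P}) : V × V) :=
      fun hh => hpq (Subtype.ext hh)
    have h4 := h.2 _ (hmem i) _ (hmem j) hpq'
    cases a <;> cases b <;> simp only [hg] <;> tauto
  have hginj : Function.Injective g := by
    intro u w huw
    have hnev : ∀ i : Fin n, ∀ a : Bool, g (some (i, a)) ≠ v := by
      intro i a
      cases a
      · exact fun hh => R.irrefl (hh ▸ (hadjv i).1)
      · exact fun hh => R.irrefl (hh ▸ (hadjv i).2)
    match u, w with
    | none, none => rfl
    | none, some (j, b) => exact absurd huw.symm (hnev j b)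
    | some (i, a), none => exact absurd huw (hnev i a)
    | some (i, a), some (j, b) =>
      by_cases hij : i = j
      · subst hij
        by_cases hab : a = b
        · rw [hab]
        · exfalso
          have hne := (hadjp i).ne
          cases a <;> cases b
          · exact hab rfl
          · exact hne (by simpa [hg] using huw)
          · exact hne (by simpa [hg] using huw.symm)
          · exact hab rfl
      · exact absurd huw (hdistinct i j hij a b)
  refine ⟨⟨g, hginj⟩, ?_⟩
  rintro u w ⟨hne, hcase⟩
  rcases hcase with rfl | rfl | ⟨i, a, b, rfl, rfl⟩
  · match w with
    | none => exact absurd rfl hne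
    | some (j, b) =>
      cases b
      · exact (hadjv j).1
      · exact (hadjv j).2
  · match u with
    | none => exact absurd rfl hne
    | some (j, b) =>
      cases b
      · exact ((hadjv j).1).symm
      · exact ((hadjv j).2).symm
  · have hab : a ≠ b := fun hh => hne (by rw [hh])
    cases a <;> cases b
    · exact absurd rfl hab
    · simpa [hg] using hadjp i
    · simpa [hg] using (hadjp i).symm
    · exact absurd rfl hab


/-- Structural lemma: degree bound and neighbourhood edge-count bound. -/
lemma structural (R : SimpleGraph V) [DecidableRel R.Adj] {n : ℕ} (hn : 1 ≤ n)
    (hFan : ¬ContainsFan R n) (hK4 : ¬ContainsK4 Rᶜ) (v : V) :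
    (Finset.univ.filter (R.Adj v ·)).card ≤ 2 * n + 1 ∧
    ((Finset.univ ×ˢ Finset.univ).filter fun p : V × V =>
        R.Adj v p.1 ∧ R.Adj v p.2 ∧ R.Adj p.1 p.2).card + 4 * n ≤ 4 * n * n := by
  classical
  set S : Finset V := Finset.univ.filter (R.Adj v ·) with hS
  -- the collection of all matchings inside S
  have hnonempty : (((S ×ˢ S).powerset).filter (fun P => IsMOn R S P)).Nonempty := by
    refine ⟨∅, ?_⟩
    simp only [mem_filter, mem_powerset]
    exact ⟨empty_subset _, ⟨by simp, by simp⟩⟩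
  obtain ⟨M, hMmem, hMmax'⟩ := Finset.exists_max_image _ Finset.card hnonempty
  have hM : IsMOn R S M := (mem_filter.1 hMmem).2
  have hmax : ∀ P, IsMOn R S P → P.card ≤ M.card := by
    intro P hP
    refine hMmax' P (mem_filter.2 ⟨mem_powerset.2 ?_, hP⟩)
    intro p hp
    exact mem_product.2 ⟨(hP.1 p hp).1, (hP.1 p hp).2.1⟩
  have hnofan : ∀ P, IsMOn R S P → P.card < n := by
    intro P hP
    by_contra hge
    push_neg at hge
    obtain ⟨Q, hQP, hQc⟩ := Finset.exists_subset_card_eq hge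
    exact hFan (containsFan_of_matching (hP.mono hQP) hQc)
  have hν : M.card + 1 ≤ n := hnofan M hM
  -- support and leftover
  have hsuppS : supp M ⊆ S := by
    intro x hx
    rw [mem_supp] at hx
    obtain ⟨p, hp, h1 | h1⟩ := hx
    · exact h1 ▸ (hM.1 p hp).1
    · exact h1 ▸ (hM.1 p hp).2.1
  set I : Finset V := S \ supp M with hI
  have hIS : ∀ x ∈ I, x ∈ S := fun x hx => (mem_sdiff.1 hx).1
  have hInsupp : ∀ x ∈ I, x ∉ supp M := fun x hx => (mem_sdiff.1 hx).2
  have hsupp_ne : ∀ x, x ∉ supp M → ∀ q ∈ M, x ≠ q.1 ∧ x ≠ q.2 := by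
    intro x hx q hq
    exact ⟨fun h => hx (mem_supp.2 ⟨q, hq, Or.inl h⟩),
           fun h => hx (mem_supp.2 ⟨q, hq, Or.inr h⟩)⟩
  have hcardS : I.card + 2 * M.card = S.card := by
    rw [← card_supp hM]
    exact card_sdiff_add_card_eq_card hsuppS
  -- extension helper
  have hext : ∀ a b : V, a ∈ S → b ∈ S → R.Adj a b → a ∉ supp M → b ∉ supp M → False := by
    intro a b haS hbS hab hasupp hbsupp
    have habne : a ≠ b := hab.ne
    have hnotmem : (a, b) ∉ M := fun hmem => hasupp (mem_supp.2 ⟨(a, b), hmem, Or.inl rfl⟩)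
    have hIsM : IsMOn R S (insert (a, b) M) := by
      constructor
      · intro p hp
        rcases mem_insert.1 hp with rfl | hp
        · exact ⟨haS, hbS, hab⟩
        · exact hM.1 p hp
      · intro p hp q hq hpq
        rcases mem_insert.1 hp with rfl | hp <;> rcases mem_insert.1 hq with rfl | hq
        · exact absurd rfl hpq
        · have h1 := hsupp_ne a hasupp q hq
          have h2 := hsupp_ne b hbsupp q hq
          exact ⟨h1.1, h1.2, h2.1, h2.2⟩
        · have h1 := hsupp_ne a hasupp p hp
          have h2 := hsupp_ne b hbsupp p hp
          exact ⟨h1.1.symm, h2.1.symm, h1.2.symm, h2.2.symm⟩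
        · exact hM.2 p hp q hq hpq
    have := hmax _ hIsM
    rw [card_insert_of_notMem hnotmem] at this
    omega
  have hIind : ∀ x ∈ I, ∀ y ∈ I, x ≠ y → ¬R.Adj x y := by
    intro x hx y hy hxy hadj
    exact hext x y (hIS x hx) (hIS y hy) hadj (hInsupp x hx) (hInsupp y hy)
  -- |I| ≤ 3
  have hI3 : I.card ≤ 3 := by
    by_contra h4
    push_neg at h4
    obtain ⟨a, ha⟩ := card_pos.1 (by omega : 0 < I.card)
    have h1 : 0 < (I.erase a).card := by rw [card_erase_of_mem ha]; omega
    obtain ⟨b, hb⟩ := card_pos.1 h1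
    have h2 : 0 < ((I.erase a).erase b).card := by
      rw [card_erase_of_mem hb, card_erase_of_mem ha]; omega
    obtain ⟨c, hc⟩ := card_pos.1 h2
    have h3 : 0 < (((I.erase a).erase b).erase c).card := by
      rw [card_erase_of_mem hc, card_erase_of_mem hb, card_erase_of_mem ha]; omega
    obtain ⟨d, hd⟩ := card_pos.1 h3
    -- distinctness and membership
    have hbI : b ∈ I := mem_of_mem_erase hb
    have hcI : c ∈ I := mem_of_mem_erase (mem_of_mem_erase hc)
    have hdI : d ∈ I := mem_of_mem_erase (mem_of_mem_erase (mem_of_mem_erase hd))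
    have hba : b ≠ a := ne_of_mem_erase hb
    have hcb : c ≠ b := ne_of_mem_erase hc
    have hca : c ≠ a := ne_of_mem_erase (mem_of_mem_erase hc)
    have hdc : d ≠ c := ne_of_mem_erase hd
    have hdb : d ≠ b := ne_of_mem_erase (mem_of_mem_erase hd)
    have hda : d ≠ a := ne_of_mem_erase (mem_of_mem_erase (mem_of_mem_erase hd))
    refine hK4 ⟨a, b, c, d, ?_, ?_, ?_, ?_, ?_, ?_⟩ <;> rw [SimpleGraph.compl_adj]
    · exact ⟨hba.symm, fun h => hIind a ha b hbI hba.symm h⟩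
    · exact ⟨hca.symm, fun h => hIind a ha c hcI hca.symm h⟩
    · exact ⟨hda.symm, fun h => hIind a ha d hdI hda.symm h⟩
    · exact ⟨hcb.symm, fun h => hIind b hbI c hcI hcb.symm h⟩
    · exact ⟨hdb.symm, fun h => hIind b hbI d hdI hdb.symm h⟩
    · exact ⟨hdc.symm, fun h => hIind c hcI d hdI hdc.symm h⟩
  constructor
  · -- degree bound
    omega
  · -- edge-count bound
    -- per-matching-edge cross bound
    have hcross : ∀ m ∈ M, (I.filter (fun y => R.Adj m.1 y)).card +
        (I.filter (fun y => R.Adj m.2 y)).card ≤ 3 := by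
      intro m hm
      set A := I.filter (fun y => R.Adj m.1 y) with hA
      set B := I.filter (fun y => R.Adj m.2 y) with hB
      have hm1S : m.1 ∈ S := (hM.1 m hm).1
      have hm2S : m.2 ∈ S := (hM.1 m hm).2.1
      have hm12 : R.Adj m.1 m.2 := (hM.1 m hm).2.2
      have hm1supp : m.1 ∈ supp M := mem_supp.2 ⟨m, hm, Or.inl rfl⟩
      have hm2supp : m.2 ∈ supp M := mem_supp.2 ⟨m, hm, Or.inr rfl⟩
      have hswap : ∀ s ∈ A, ∀ t ∈ B, s = t := by
        intro s hs t ht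
        by_contra hst
        have hsA := mem_filter.1 hs
        have htB := mem_filter.1 ht
        have hsI := hsA.1
        have htI := htB.1
        have hadj1 : R.Adj m.1 s := hsA.2
        have hadj2 : R.Adj m.2 t := htB.2
        have hssupp : s ∉ supp M := hInsupp s hsI
        have htsupp : t ∉ supp M := hInsupp t htI
        set M' := insert (m.1, s) (insert (m.2, t) (M.erase m)) with hM'
        have hp1 : (m.1, s) ≠ (m.2, t) := by
          intro h
          exact hm12.ne (congrArg Prod.fst h)
        have hp1e : (m.1, s) ∉ M.erase m := by
          intro h
          exact hssupp (mem_supp.2 ⟨(m.1, s), mem_of_mem_erase h, Or.inr rfl⟩)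
        have hp2e : (m.2, t) ∉ M.erase m := by
          intro h
          exact htsupp (mem_supp.2 ⟨(m.2, t), mem_of_mem_erase h, Or.inr rfl⟩)
        have herase : ∀ q ∈ M.erase m, m.1 ≠ q.1 ∧ m.1 ≠ q.2 ∧ m.2 ≠ q.1 ∧ m.2 ≠ q.2 := by
          intro q hq
          exact hM.2 m hm q (mem_of_mem_erase hq) (Ne.symm (ne_of_mem_erase hq))
        have hIsM : IsMOn R S M' := by
          constructor
          · intro p hp
            rcases mem_insert.1 hp with rfl | hp
            · exact ⟨hm1S, hIS s hsI, hadj1⟩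
            rcases mem_insert.1 hp with rfl | hp
            · exact ⟨hm2S, hIS t htI, hadj2⟩
            · exact hM.1 p (mem_of_mem_erase hp)
          · intro p hp q hq hpq
            have hcases : ∀ r ∈ M', r = (m.1, s) ∨ r = (m.2, t) ∨ r ∈ M.erase m := by
              intro r hr
              rcases mem_insert.1 hr with rfl | hr
              · exact Or.inl rfl
              rcases mem_insert.1 hr with rfl | hr
              · exact Or.inr (Or.inl rfl)
              · exact Or.inr (Or.inr hr)
            have hq1supp : ∀ r ∈ M.erase m, r.1 ∈ supp M ∧ r.2 ∈ supp M := by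
              intro r hr
              exact ⟨mem_supp.2 ⟨r, mem_of_mem_erase hr, Or.inl rfl⟩,
                     mem_supp.2 ⟨r, mem_of_mem_erase hr, Or.inr rfl⟩⟩
            have hne_supp : ∀ x y : V, x ∉ supp M → y ∈ supp M → x ≠ y :=
              fun x y hx hy h => hx (h ▸ hy)
            rcases hcases p hp with rfl | rfl | hpe <;> rcases hcases q hq with rfl | rfl | hqe
            · exact absurd rfl hpq
            · exact ⟨hm12.ne, (hne_supp t m.1 htsupp hm1supp).symm,
                hne_supp s m.2 hssupp hm2supp, hst⟩
            · have h1 := herase q hqe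
              have h2 := hq1supp q hqe
              exact ⟨h1.1, h1.2.1, hne_supp s q.1 hssupp h2.1, hne_supp s q.2 hssupp h2.2⟩
            · exact ⟨hm12.ne.symm, (hne_supp s m.2 hssupp hm2supp).symm,
                hne_supp t m.1 htsupp hm1supp, Ne.symm hst⟩
            · exact absurd rfl hpq
            · have h1 := herase q hqe
              have h2 := hq1supp q hqe
              exact ⟨h1.2.2.1, h1.2.2.2, hne_supp t q.1 htsupp h2.1, hne_supp t q.2 htsupp h2.2⟩
            · have h1 := herase p hpe
              have h2 := hq1supp p hpe
              exact ⟨h1.1.symm, (hne_supp s p.1 hssupp h2.1).symm, h1.2.1.symm,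
                (hne_supp s p.2 hssupp h2.2).symm⟩
            · have h1 := herase p hpe
              have h2 := hq1supp p hpe
              exact ⟨h1.2.2.1.symm, (hne_supp t p.1 htsupp h2.1).symm, h1.2.2.2.symm,
                (hne_supp t p.2 htsupp h2.2).symm⟩
            · exact hM.2 p (mem_of_mem_erase hpe) q (mem_of_mem_erase hqe) hpq
        have hcard : M'.card = M.card + 1 := by
          rw [hM', card_insert_of_notMem, card_insert_of_notMem hp2e,
              card_erase_of_mem hm]
          · have : 1 ≤ M.card := card_pos.2 ⟨m, hm⟩
            omega
          · intro h
            rcases mem_insert.1 h with h | h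
            · exact hp1 h
            · exact hp1e h
        have := hmax M' hIsM
        omega
      by_cases hAne : A.Nonempty
      · by_cases hBne : B.Nonempty
        · obtain ⟨t0, ht0⟩ := hBne
          obtain ⟨s0, hs0⟩ := hAne
          have hA1 : A ⊆ {t0} := fun x hx => mem_singleton.2 (hswap x hx t0 ht0)
          have hB1 : B ⊆ {s0} := fun x hx => mem_singleton.2 (hswap s0 hs0 x hx).symm
          have := card_le_card hA1
          have := card_le_card hB1
          simp only [card_singleton] at *
          omega
        · rw [not_nonempty_iff_eq_empty.1 hBne]
          have hAI : A ⊆ I := filter_subset _ _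
          have := card_le_card hAI
          simp only [card_empty]
          omega
      · rw [not_nonempty_iff_eq_empty.1 hAne]
        have hBI : B ⊆ I := filter_subset _ _
        have := card_le_card hBI
        simp only [card_empty]
        omega
    -- now count the red ordered pairs inside S
    set E := ((Finset.univ ×ˢ Finset.univ).filter fun p : V × V =>
        R.Adj v p.1 ∧ R.Adj v p.2 ∧ R.Adj p.1 p.2) with hE
    set X1 := ((supp M ×ˢ I).filter fun p : V × V => R.Adj p.1 p.2) with hX1
    set X2 := ((I ×ˢ supp M).filter fun p : V × V => R.Adj p.1 p.2) with hX2
    have hmemS : ∀ x : V, R.Adj v x → x ∈ S := by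
      intro x hx
      rw [hS, mem_filter]
      exact ⟨mem_univ x, hx⟩
    have hEsub : E ⊆ (supp M).offDiag ∪ (X1 ∪ X2) := by
      intro p hp
      simp only [hE, mem_filter, mem_product] at hp
      obtain ⟨-, h1, h2, h3⟩ := hp
      have hp1S : p.1 ∈ S := hmemS _ h1
      have hp2S : p.2 ∈ S := hmemS _ h2
      have hd : ∀ x ∈ S, x ∈ supp M ∨ x ∈ I := by
        intro x hx
        by_cases h : x ∈ supp M
        · exact Or.inl h
        · exact Or.inr (mem_sdiff.2 ⟨hx, h⟩)
      rcases hd p.1 hp1S with ha | ha <;> rcases hd p.2 hp2S with hb | hb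
      · exact mem_union.2 (Or.inl (mem_offDiag.2 ⟨ha, hb, h3.ne⟩))
      · exact mem_union.2 (Or.inr (mem_union.2 (Or.inl (mem_filter.2 ⟨mem_product.2 ⟨ha, hb⟩, h3⟩))))
      · exact mem_union.2 (Or.inr (mem_union.2 (Or.inr (mem_filter.2 ⟨mem_product.2 ⟨ha, hb⟩, h3⟩))))
      · exact absurd h3 (hIind _ ha _ hb h3.ne)
    have hX1card : X1.card ≤ 3 * M.card := by
      have hsubB : X1 ⊆ M.biUnion (fun m => (({m.1, m.2} : Finset V) ×ˢ I).filter
          fun p : V × V => R.Adj p.1 p.2) := by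
        intro p hp
        simp only [hX1, mem_filter, mem_product] at hp
        obtain ⟨⟨hp1, hp2⟩, hp3⟩ := hp
        obtain ⟨m, hm, hor⟩ := mem_supp.1 hp1
        refine mem_biUnion.2 ⟨m, hm, mem_filter.2 ⟨mem_product.2 ⟨?_, hp2⟩, hp3⟩⟩
        rcases hor with h | h
        · exact mem_insert.2 (Or.inl h)
        · exact mem_insert.2 (Or.inr (mem_singleton.2 h))
      refine (card_le_card hsubB).trans ?_
      refine le_trans card_biUnion_le ?_
      have hpiece : ∀ m ∈ M, ((({m.1, m.2} : Finset V) ×ˢ I).filter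
          (fun p : V × V => R.Adj p.1 p.2)).card ≤ 3 := by
        intro m hm
        have hsub : (({m.1, m.2} : Finset V) ×ˢ I).filter (fun p : V × V => R.Adj p.1 p.2) ⊆
            (({m.1} : Finset V) ×ˢ (I.filter (fun y => R.Adj m.1 y))) ∪
            (({m.2} : Finset V) ×ˢ (I.filter (fun y => R.Adj m.2 y))) := by
          intro p hp
          simp only [mem_filter, mem_product, mem_insert, mem_singleton] at hp
          obtain ⟨⟨h1 | h1, h2⟩, h3⟩ := hp
          · exact mem_union.2 (Or.inl (mem_product.2 ⟨mem_singleton.2 h1,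
              mem_filter.2 ⟨h2, h1 ▸ h3⟩⟩))
          · exact mem_union.2 (Or.inr (mem_product.2 ⟨mem_singleton.2 h1,
              mem_filter.2 ⟨h2, h1 ▸ h3⟩⟩))
        refine (card_le_card hsub).trans ?_
        refine le_trans (card_union_le _ _) ?_
        simp only [card_product, card_singleton, one_mul]
        exact hcross m hm
      calc ∑ m ∈ M, ((({m.1, m.2} : Finset V) ×ˢ I).filter
              (fun p : V × V => R.Adj p.1 p.2)).card
          ≤ ∑ _m ∈ M, 3 := Finset.sum_le_sum hpiece
        _ = 3 * M.card := by rw [Finset.sum_const, smul_eq_mul, mul_comm]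
    have hX2card : X2.card = X1.card := by
      refine Finset.card_bij (fun p _ => (p.2, p.1)) ?_ ?_ ?_
      · intro p hp
        rw [hX2, mem_filter, mem_product] at hp
        rw [hX1, mem_filter, mem_product]
        exact ⟨⟨hp.1.2, hp.1.1⟩, hp.2.symm⟩
      · intro p hp q hq h
        exact Prod.ext (congrArg Prod.snd h) (congrArg Prod.fst h)
      · intro q hq
        rw [hX1, mem_filter, mem_product] at hq
        refine ⟨(q.2, q.1), ?_, by simp⟩
        rw [hX2, mem_filter, mem_product]
        exact ⟨⟨hq.1.2, hq.1.1⟩, hq.2.symm⟩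
    have h1 : E.card ≤ (supp M).offDiag.card + (X1.card + X2.card) := by
      calc E.card ≤ ((supp M).offDiag ∪ (X1 ∪ X2)).card := card_le_card hEsub
        _ ≤ (supp M).offDiag.card + (X1 ∪ X2).card := card_union_le _ _
        _ ≤ (supp M).offDiag.card + (X1.card + X2.card) :=
            Nat.add_le_add_left (card_union_le _ _) _
    have h2 : (supp M).offDiag.card + 2 * M.card = 4 * M.card * M.card := by
      rw [Finset.offDiag_card, card_supp hM]
      have hq : 2 * M.card * (2 * M.card) = 4 * M.card * M.card := by ring
      rcases Nat.eq_zero_or_pos M.card with h0 | h0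
      · simp [h0]
      · have h3 : 2 * M.card ≤ 4 * M.card * M.card := by nlinarith
        omega
    have hEcard : E.card ≤ 4 * M.card * M.card + 4 * M.card := by omega
    have hfin : 4 * M.card * M.card + 4 * M.card + 4 * n ≤ 4 * n * n := by
      obtain ⟨d, hd⟩ : ∃ d, n = M.card + 1 + d := ⟨n - (M.card + 1), by omega⟩
      rw [hd]
      ring_nf
      nlinarith [Nat.zero_le (M.card * d)]
    omega

/-- Split a finset of ordered pairs into diagonal, adjacent, and independent parts. -/
lemma partition3 (R : SimpleGraph V) [DecidableRel R.Adj] (B : Finset (V × V)) :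
    B.card = (B.filter fun p => p.1 = p.2).card + (B.filter fun p => R.Adj p.1 p.2).card
      + (B.filter fun p => p.1 ≠ p.2 ∧ ¬R.Adj p.1 p.2).card := by
  have h1 := Finset.card_filter_add_card_filter_not
    (s := B) (p := fun p : V × V => p.1 = p.2)
  have h2 := Finset.card_filter_add_card_filter_not
    (s := B.filter fun p : V × V => ¬p.1 = p.2) (p := fun p : V × V => R.Adj p.1 p.2)
  have e1 : (B.filter fun p : V × V => ¬p.1 = p.2).filter (fun p => R.Adj p.1 p.2)
      = B.filter fun p => R.Adj p.1 p.2 := by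
    rw [Finset.filter_filter]
    apply Finset.filter_congr
    intro p hp
    constructor
    · tauto
    · intro h; exact ⟨h.ne, h⟩
  have e2 : (B.filter fun p : V × V => ¬p.1 = p.2).filter (fun p => ¬R.Adj p.1 p.2)
      = B.filter fun p => p.1 ≠ p.2 ∧ ¬R.Adj p.1 p.2 := by
    rw [Finset.filter_filter]
  rw [e1, e2] at h2
  omega

/-- The diagonal-type part has the same cardinality as the neighborhood. -/
lemma diag_card (R : SimpleGraph V) [DecidableRel R.Adj] (v : V) :
    (((Finset.univ ×ˢ Finset.univ).filter fun p : V × V =>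
      R.Adj v p.1 ∧ R.Adj v p.2).filter fun p => p.1 = p.2).card
      = (Finset.univ.filter (R.Adj v ·)).card := by
  refine Finset.card_bij (fun p _ => p.1) ?_ ?_ ?_
  · intro p hp
    simp only [mem_filter, mem_product] at hp
    simp only [mem_filter]
    exact ⟨mem_univ _, hp.1.2.1⟩
  · intro p hp q hq h
    simp only [mem_filter, mem_product] at hp hq
    exact Prod.ext h (by rw [← hp.2, ← hq.2, h])
  · intro x hx
    simp only [mem_filter] at hx
    exact ⟨(x, x), by simp [hx.2], rfl⟩

lemma univ_diag_card : (((Finset.univ ×ˢ Finset.univ) : Finset (V × V)).filter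
    fun p : V × V => p.1 = p.2).card = Fintype.card V := by
  rw [← Finset.card_univ]
  refine Finset.card_bij (fun p _ => p.1) ?_ ?_ ?_
  · intro p hp; exact mem_univ _
  · intro p hp q hq h
    simp only [mem_filter, mem_product] at hp hq
    exact Prod.ext h (by rw [← hp.2, ← hq.2, h])
  · intro x hx
    exact ⟨(x, x), by simp, rfl⟩

lemma handshake (R : SimpleGraph V) [DecidableRel R.Adj] :
    (((Finset.univ ×ˢ Finset.univ) : Finset (V × V)).filter
      fun p : V × V => R.Adj p.1 p.2).card
    = ∑ v : V, (Finset.univ.filter (R.Adj v ·)).card := by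
  rw [Finset.card_filter, Finset.sum_product]
  congr 1
  ext v
  rw [Finset.card_filter]

lemma sum_swap_card (C : V → V × V → Prop) [∀ v p, Decidable (C v p)] :
    ∑ v : V, ((Finset.univ ×ˢ Finset.univ).filter (C v)).card
    = ∑ p ∈ (Finset.univ ×ˢ Finset.univ : Finset (V × V)),
        (Finset.univ.filter fun v => C v p).card := by
  simp only [Finset.card_filter]
  exact Finset.sum_comm

def nbrPLACEHOLDER : Nat := 0

lemma vertex_count (R : SimpleGraph V) [DecidableRel R.Adj] (v : V) :
    (Finset.univ.filter (R.Adj v ·)).card * (Finset.univ.filter (R.Adj v ·)).card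
      = (Finset.univ.filter (R.Adj v ·)).card
        + ((Finset.univ ×ˢ Finset.univ).filter fun p : V × V =>
            R.Adj v p.1 ∧ R.Adj v p.2 ∧ R.Adj p.1 p.2).card
        + ((Finset.univ ×ˢ Finset.univ).filter fun p : V × V =>
            R.Adj v p.1 ∧ R.Adj v p.2 ∧ p.1 ≠ p.2 ∧ ¬R.Adj p.1 p.2).card := by
  have h := partition3 R ((Finset.univ ×ˢ Finset.univ).filter
    fun p : V × V => R.Adj v p.1 ∧ R.Adj v p.2)
  have hB : ((Finset.univ ×ˢ Finset.univ).filter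
      (fun p : V × V => R.Adj v p.1 ∧ R.Adj v p.2)).card
      = (Finset.univ.filter (R.Adj v ·)).card * (Finset.univ.filter (R.Adj v ·)).card := by
    rw [← Finset.card_product]
    congr 1
    ext p
    simp only [mem_filter, mem_product, mem_univ, true_and]
  have he : (((Finset.univ ×ˢ Finset.univ).filter
        (fun p : V × V => R.Adj v p.1 ∧ R.Adj v p.2)).filter
        fun p => R.Adj p.1 p.2)
      = (Finset.univ ×ˢ Finset.univ).filter
        (fun p : V × V => R.Adj v p.1 ∧ R.Adj v p.2 ∧ R.Adj p.1 p.2) := by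
    rw [Finset.filter_filter]
    apply Finset.filter_congr
    intro p _
    tauto
  have hb : (((Finset.univ ×ˢ Finset.univ).filter
        (fun p : V × V => R.Adj v p.1 ∧ R.Adj v p.2)).filter
        fun p => p.1 ≠ p.2 ∧ ¬R.Adj p.1 p.2)
      = (Finset.univ ×ˢ Finset.univ).filter
        (fun p : V × V => R.Adj v p.1 ∧ R.Adj v p.2 ∧ p.1 ≠ p.2 ∧ ¬R.Adj p.1 p.2) := by
    rw [Finset.filter_filter]
    apply Finset.filter_congr
    intro p _
    tauto
  have hdg := diag_card R v
  rw [hB, he, hb, hdg] at h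
  omega

lemma global_count (R : SimpleGraph V) [DecidableRel R.Adj] :
    Fintype.card V * Fintype.card V
    = Fintype.card V + (∑ v : V, (Finset.univ.filter (R.Adj v ·)).card)
      + ((Finset.univ ×ˢ Finset.univ).filter
          fun p : V × V => p.1 ≠ p.2 ∧ ¬R.Adj p.1 p.2).card := by
  have h := partition3 R (Finset.univ ×ˢ Finset.univ : Finset (V × V))
  rw [univ_diag_card, handshake] at h
  have hc : (Finset.univ ×ˢ Finset.univ : Finset (V × V)).card
      = Fintype.card V * Fintype.card V := by
    rw [Finset.card_product]
    simp
  omega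

theorem red_clique_number_lower' (n : ℕ) (hn : 4 ≤ n)
    (R : SimpleGraph (Fin (6 * n)))
    (hfree : ¬ ContainsFan R n ∧ ¬ ContainsK4 Rᶜ) :
    2 * n - 2 ≤ R.cliqueNum := by
  obtain ⟨hFan, hK4⟩ := hfree
  obtain ⟨k, rfl⟩ : ∃ k, n = k + 4 := ⟨n - 4, by omega⟩
  letI : DecidableRel R.Adj := Classical.decRel _
  have hcardV : (Finset.univ : Finset (Fin (6*(k+4)))).card = 6*(k+4) := by simp
  have hstr := fun v => structural R (n := k+4) (by omega) hFan hK4 v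
  have hdle : ∀ v, (Finset.univ.filter (R.Adj v ·)).card ≤ 2*k+9 := by
    intro v
    have := (hstr v).1
    omega
  by_cases hGE : ∃ s : Finset (Fin (6*(k+4))), R.IsClique ↑s ∧ 2*k+6 ≤ s.card
  · obtain ⟨s, hs, hsc⟩ := hGE
    have := SimpleGraph.IsClique.card_le_cliqueNum (tc := hs)
    omega
  push_neg at hGE
  exfalso
  by_cases hGood : ∃ u v : Fin (6*(k+4)), u ≠ v ∧ ¬R.Adj u v ∧
      ((Finset.univ.filter (R.Adj u ·)) ∪ (Finset.univ.filter (R.Adj v ·))).card ≤ 4*k+16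
  · -- a good blue pair gives a big red clique
    obtain ⟨u, v, huv, hnadj, hcard⟩ := hGood
    set B : Finset (Fin (6*(k+4))) := insert u (insert v
      ((Finset.univ.filter (R.Adj u ·)) ∪ (Finset.univ.filter (R.Adj v ·)))) with hB
    set S := Finset.univ \ B with hSdef
    have hSmem : ∀ p ∈ S, p ≠ u ∧ p ≠ v ∧ ¬R.Adj u p ∧ ¬R.Adj v p := by
      intro p hp
      rw [hSdef, mem_sdiff, hB] at hp
      have hp2 := hp.2
      simp only [mem_insert, mem_union, mem_filter, mem_univ, true_and] at hp2
      push_neg at hp2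
      exact ⟨hp2.1, hp2.2.1, hp2.2.2.1, hp2.2.2.2⟩
    have hclique : R.IsClique ↑S := by
      intro p hp q hq hpq
      by_contra hnadj2
      have hp' := hSmem p (Finset.mem_coe.1 hp)
      have hq' := hSmem q (Finset.mem_coe.1 hq)
      exact hK4 ⟨u, v, p, q,
        (SimpleGraph.compl_adj R _ _).2 ⟨huv, hnadj⟩,
        (SimpleGraph.compl_adj R _ _).2 ⟨hp'.1.symm, hp'.2.2.1⟩,
        (SimpleGraph.compl_adj R _ _).2 ⟨hq'.1.symm, hq'.2.2.1⟩,
        (SimpleGraph.compl_adj R _ _).2 ⟨hp'.2.1.symm, hp'.2.2.2⟩,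
        (SimpleGraph.compl_adj R _ _).2 ⟨hq'.2.1.symm, hq'.2.2.2⟩,
        (SimpleGraph.compl_adj R _ _).2 ⟨hpq, hnadj2⟩⟩
    have hcardS : 2*k+6 ≤ S.card := by
      have h1 : B.card ≤ 4*k+18 := by
        rw [hB]
        refine le_trans (card_insert_le _ _) ?_
        have h2 := card_insert_le v
          ((Finset.univ.filter (R.Adj u ·)) ∪ (Finset.univ.filter (R.Adj v ·)))
        omega
      rw [hSdef, card_sdiff_of_subset (subset_univ _), hcardV]
      omega
    have := hGE S hclique
    omega
  -- bad case: counting contradiction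
  push_neg at hGood
  have hbad : ∀ u v : Fin (6*(k+4)), u ≠ v → ¬R.Adj u v →
      4*k+17 ≤ ((Finset.univ.filter (R.Adj u ·)) ∪ (Finset.univ.filter (R.Adj v ·))).card := by
    intro u v h1 h2
    have := hGood u v h1 h2
    omega
  have hdge : ∀ v, 2*k+8 ≤ (Finset.univ.filter (R.Adj v ·)).card := by
    intro v
    have hW : (Finset.univ \ insert v (Finset.univ.filter (R.Adj v ·))).Nonempty := by
      rw [← card_pos, card_sdiff_of_subset (subset_univ _), hcardV]
      have h1 := card_insert_le v (Finset.univ.filter (R.Adj v ·))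
      have := hdle v
      omega
    obtain ⟨u, hu⟩ := hW
    rw [mem_sdiff, mem_insert] at hu
    push_neg at hu
    have hvu : v ≠ u := fun h => hu.2.1 h.symm
    have hnadjvu : ¬R.Adj v u := by
      intro h
      exact hu.2.2 (mem_filter.2 ⟨mem_univ _, h⟩)
    have h1 := hbad v u hvu hnadjvu
    have h2 := card_union_le (Finset.univ.filter (R.Adj v ·)) (Finset.univ.filter (R.Adj u ·))
    have := hdle u
    omega
  -- the minimum-degree vertices form a red clique
  have hD20clique : R.IsClique
      ↑(Finset.univ.filter (fun v => (Finset.univ.filter (R.Adj v ·)).card = 2*k+8)) := by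
    intro u hu v hv huv
    by_contra hnadj
    have h1 := hbad u v huv hnadj
    have h2 := card_union_le (Finset.univ.filter (R.Adj u ·)) (Finset.univ.filter (R.Adj v ·))
    simp only [Finset.mem_coe, mem_filter] at hu hv
    omega
  have hD20 := hGE _ hD20clique
  -- D21 : the vertices of degree 2k+9
  have hnotD21 : Finset.univ.filter
      (fun v => ¬(Finset.univ.filter (R.Adj v ·)).card = 2*k+9)
      ⊆ Finset.univ.filter (fun v => (Finset.univ.filter (R.Adj v ·)).card = 2*k+8) := by
    intro v hv
    rw [mem_filter] at hv ⊢
    have := hdle v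
    have := hdge v
    exact ⟨mem_univ _, by omega⟩
  have hDsum := Finset.card_filter_add_card_filter_not
    (s := (Finset.univ : Finset (Fin (6*(k+4)))))
    (p := fun v => (Finset.univ.filter (R.Adj v ·)).card = 2*k+9)
  rw [hcardV] at hDsum
  have hD21ge : 4*k+19 ≤ (Finset.univ.filter (fun v => (Finset.univ.filter (R.Adj v ·)).card = 2*k+9)).card := by
    have := card_le_card hnotD21
    omega
  -- double counting
  have hswap := sum_swap_card (V := Fin (6*(k+4)))
    (C := fun v p => R.Adj v p.1 ∧ R.Adj v p.2 ∧ p.1 ≠ p.2 ∧ ¬R.Adj p.1 p.2)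
  have hperp : ∀ p ∈ (Finset.univ ×ˢ Finset.univ : Finset (Fin (6*(k+4)) × Fin (6*(k+4)))),
      (Finset.univ.filter fun v => R.Adj v p.1 ∧ R.Adj v p.2 ∧ p.1 ≠ p.2 ∧ ¬R.Adj p.1 p.2).card
      ≤ if (p.1 ≠ p.2 ∧ ¬R.Adj p.1 p.2) then 1 else 0 := by
    intro p _
    by_cases hBp : p.1 ≠ p.2 ∧ ¬R.Adj p.1 p.2
    · rw [if_pos hBp]
      have hsub : (Finset.univ.filter fun v =>
          R.Adj v p.1 ∧ R.Adj v p.2 ∧ p.1 ≠ p.2 ∧ ¬R.Adj p.1 p.2)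
          ⊆ (Finset.univ.filter (R.Adj p.1 ·)) ∩ (Finset.univ.filter (R.Adj p.2 ·)) := by
        intro w hw
        simp only [mem_filter, mem_univ, true_and] at hw
        rw [mem_inter, mem_filter, mem_filter]
        exact ⟨⟨mem_univ _, hw.1.symm⟩, ⟨mem_univ _, hw.2.1.symm⟩⟩
      have h1 := card_le_card hsub
      have h2 := Finset.card_inter_add_card_union
        (Finset.univ.filter (R.Adj p.1 ·)) (Finset.univ.filter (R.Adj p.2 ·))
      have h3 := hbad p.1 p.2 hBp.1 hBp.2
      have h4 := hdle p.1
      have h5 := hdle p.2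
      omega
    · rw [if_neg hBp]
      simp only [Nat.le_zero, card_eq_zero]
      rw [Finset.filter_eq_empty_iff]
      intro v _
      intro h
      exact hBp ⟨h.2.2.1, h.2.2.2⟩
  have hbp2OB : ∑ v : Fin (6*(k+4)), ((Finset.univ ×ˢ Finset.univ).filter
        (fun p : Fin (6*(k+4)) × Fin (6*(k+4)) =>
          R.Adj v p.1 ∧ R.Adj v p.2 ∧ p.1 ≠ p.2 ∧ ¬R.Adj p.1 p.2)).card
      ≤ ((Finset.univ ×ˢ Finset.univ).filter
        (fun p : Fin (6*(k+4)) × Fin (6*(k+4)) => p.1 ≠ p.2 ∧ ¬R.Adj p.1 p.2)).card := by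
    rw [hswap, Finset.card_filter]
    exact Finset.sum_le_sum hperp
  -- summed vertex partition
  have hsumv : ∑ v : Fin (6*(k+4)),
        (Finset.univ.filter (R.Adj v ·)).card * (Finset.univ.filter (R.Adj v ·)).card
      = (∑ v : Fin (6*(k+4)), (Finset.univ.filter (R.Adj v ·)).card)
        + (∑ v : Fin (6*(k+4)), ((Finset.univ ×ˢ Finset.univ).filter
            (fun p : Fin (6*(k+4)) × Fin (6*(k+4)) =>
              R.Adj v p.1 ∧ R.Adj v p.2 ∧ R.Adj p.1 p.2)).card)
        + (∑ v : Fin (6*(k+4)), ((Finset.univ ×ˢ Finset.univ).filter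
            (fun p : Fin (6*(k+4)) × Fin (6*(k+4)) =>
              R.Adj v p.1 ∧ R.Adj v p.2 ∧ p.1 ≠ p.2 ∧ ¬R.Adj p.1 p.2)).card) := by
    rw [← Finset.sum_add_distrib, ← Finset.sum_add_distrib]
    exact Finset.sum_congr rfl (fun v _ => vertex_count R v)
  -- bound on Σ e2
  have hsume2 : (∑ v : Fin (6*(k+4)), ((Finset.univ ×ˢ Finset.univ).filter
        (fun p : Fin (6*(k+4)) × Fin (6*(k+4)) =>
          R.Adj v p.1 ∧ R.Adj v p.2 ∧ R.Adj p.1 p.2)).card) + 6*(k+4)*(4*(k+4))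
      ≤ 6*(k+4)*(4*(k+4)*(k+4)) := by
    have h1 : ∀ v : Fin (6*(k+4)), ((Finset.univ ×ˢ Finset.univ).filter
        (fun p : Fin (6*(k+4)) × Fin (6*(k+4)) =>
          R.Adj v p.1 ∧ R.Adj v p.2 ∧ R.Adj p.1 p.2)).card + 4*(k+4) ≤ 4*(k+4)*(k+4) :=
      fun v => (hstr v).2
    calc (∑ v : Fin (6*(k+4)), ((Finset.univ ×ˢ Finset.univ).filter
            (fun p : Fin (6*(k+4)) × Fin (6*(k+4)) =>
              R.Adj v p.1 ∧ R.Adj v p.2 ∧ R.Adj p.1 p.2)).card) + 6*(k+4)*(4*(k+4))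
        = ∑ v : Fin (6*(k+4)), (((Finset.univ ×ˢ Finset.univ).filter
            (fun p : Fin (6*(k+4)) × Fin (6*(k+4)) =>
              R.Adj v p.1 ∧ R.Adj v p.2 ∧ R.Adj p.1 p.2)).card + 4*(k+4)) := by
          rw [Finset.sum_add_distrib, Finset.sum_const, hcardV, smul_eq_mul]
      _ ≤ ∑ _v : Fin (6*(k+4)), 4*(k+4)*(k+4) := Finset.sum_le_sum (fun v _ => h1 v)
      _ = 6*(k+4)*(4*(k+4)*(k+4)) := by
          rw [Finset.sum_const, hcardV, smul_eq_mul]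
  -- global partition
  have hglob := global_count R
  rw [Fintype.card_fin] at hglob
  -- lower bound on Σ d²
  have hsplitd := Finset.sum_filter_add_sum_filter_not
    (Finset.univ : Finset (Fin (6*(k+4))))
    (fun v => (Finset.univ.filter (R.Adj v ·)).card = 2*k+9)
    (fun v => (Finset.univ.filter (R.Adj v ·)).card * (Finset.univ.filter (R.Adj v ·)).card)
  have hleft : ∑ v ∈ (Finset.univ.filter (fun v => (Finset.univ.filter (R.Adj v ·)).card = 2*k+9)),
      (Finset.univ.filter (R.Adj v ·)).card * (Finset.univ.filter (R.Adj v ·)).card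
      = (Finset.univ.filter (fun v => (Finset.univ.filter (R.Adj v ·)).card = 2*k+9)).card * ((2*k+9)*(2*k+9)) := by
    have hc : ∀ v ∈ (Finset.univ.filter (fun v => (Finset.univ.filter (R.Adj v ·)).card = 2*k+9)), (Finset.univ.filter (R.Adj v ·)).card
        * (Finset.univ.filter (R.Adj v ·)).card = (2*k+9)*(2*k+9) := by
      intro v hv
      rw [mem_filter] at hv
      rw [hv.2]
    rw [Finset.sum_congr rfl hc, Finset.sum_const, smul_eq_mul]
  have hright : ∑ v ∈ Finset.univ.filter
        (fun v => ¬(Finset.univ.filter (R.Adj v ·)).card = 2*k+9),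
      (Finset.univ.filter (R.Adj v ·)).card * (Finset.univ.filter (R.Adj v ·)).card
      = (6*(k+4) - (Finset.univ.filter (fun v => (Finset.univ.filter (R.Adj v ·)).card = 2*k+9)).card) * ((2*k+8)*(2*k+8)) := by
    have hc : ∀ v ∈ Finset.univ.filter
        (fun v => ¬(Finset.univ.filter (R.Adj v ·)).card = 2*k+9),
        (Finset.univ.filter (R.Adj v ·)).card
        * (Finset.univ.filter (R.Adj v ·)).card = (2*k+8)*(2*k+8) := by
      intro v hv
      rw [mem_filter] at hv
      have := hdle v
      have := hdge v
      have hv8 : (Finset.univ.filter (R.Adj v ·)).card = 2*k+8 := by omega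
      rw [hv8]
    rw [Finset.sum_congr rfl hc, Finset.sum_const, smul_eq_mul]
    congr 1
    omega
  -- final contradiction
  have hSd2 : ∑ v : Fin (6*(k+4)),
      (Finset.univ.filter (R.Adj v ·)).card * (Finset.univ.filter (R.Adj v ·)).card
      = (Finset.univ.filter (fun v => (Finset.univ.filter (R.Adj v ·)).card = 2*k+9)).card * ((2*k+9)*(2*k+9)) + (6*(k+4) - (Finset.univ.filter (fun v => (Finset.univ.filter (R.Adj v ·)).card = 2*k+9)).card) * ((2*k+8)*(2*k+8)) := by
    rw [← hsplitd, hleft, hright]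
  set Dc := (Finset.univ.filter
    (fun v => (Finset.univ.filter (R.Adj v ·)).card = 2*k+9)).card with hDc
  have hD21le : Dc ≤ 6*(k+4) :=
    le_trans (card_le_card (filter_subset _ _)) (le_of_eq hcardV)
  obtain ⟨m, hm⟩ : ∃ m, 6*(k+4) = Dc + m := ⟨6*(k+4) - Dc, by omega⟩
  have hmm : 6*(k+4) - Dc = m := by omega
  rw [hmm] at hSd2
  have hm2 : (Dc + m)*((2*k+8)*(2*k+8)) = (6*(k+4))*((2*k+8)*(2*k+8)) := by rw [← hm]
  have hDc17 : (4*k+19)*(4*k+17) ≤ Dc*(4*k+17) := Nat.mul_le_mul_right _ hD21ge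
  nlinarith [hsumv, hsume2, hbp2OB, hglob, hSd2, hm2, hDc17]

end RedLower

/-- In an `(Fₙ, K₄)`-free coloring of `K_{6n}` (`n ≥ 4`), the clique number of the
red subgraph is at least `2n - 2`. -/
theorem red_clique_number_lower (n : ℕ) (hn : 4 ≤ n)
    (R : SimpleGraph (Fin (6 * n)))
    (hfree : ¬ ContainsFan R n ∧ ¬ ContainsK4 Rᶜ) :
    2 * n - 2 ≤ R.cliqueNum :=
  RedLower.red_clique_number_lower' n hn R hfree
end

section
/- Let n ≥ 4 be an integer. Let K_{6n} be given a red/blue edge-coloring that is (F_n, K_4)-free and suppose its vertex set is partitioned into three pairwise disjoint red cliques G_1, G_2, G_3 each of order 2n. Let w be a new vertex joined to some vertices of K_{6n} with red/blue colored edges such that the resulting coloring is still (F_n, K_4)-free. Then there is no permutation (i, j, k) of (1, 2, 3) such that w has at least 1 blue neighbor in G_i, at least 2 blue neighbors in G_j, and at least 3 blue neighbors in G_k. -/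
open SimpleGraph

/-- Extend a graph on `V` by one extra vertex (`none`) joined to the set `S`. -/
def extendGraph {V : Type*} (G : SimpleGraph V) (S : Set V) : SimpleGraph (Option V) where
  Adj u v :=
    match u, v with
    | some a, some b => G.Adj a b
    | none, some a => a ∈ S
    | some a, none => a ∈ S
    | none, none => False
  symm := ⟨by rintro (_ | a) (_ | b) h <;> first | exact h | exact G.adj_symm h | exact G.symm h⟩
  loopless := ⟨by rintro (_ | a) h <;> first | exact h | exact G.irrefl h⟩

/-- If a vertex `v` outside a red clique `Gi` of order `2n` has two red neighbors
`p, q` inside `Gi`, then the red graph contains a fan `Fₙ` (center `p`, one edge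
`(v, q)`, and `n - 1` edges inside `Gi \ {p, q}`). -/
lemma two_red_nbrs_fan {n : ℕ} (hn : 4 ≤ n) (R : SimpleGraph (Fin (6 * n)))
    (Gi : Finset (Fin (6 * n))) (hcard : Gi.card = 2 * n)
    (hclique : R.IsClique ↑Gi) (v p q : Fin (6 * n))
    (hv : v ∉ Gi) (hp : p ∈ Gi) (hq : q ∈ Gi) (hpq : p ≠ q)
    (hvp : R.Adj v p) (hvq : R.Adj v q) : ContainsFan R n := by
  classical
  set S : Finset (Fin (6 * n)) := (Gi.erase p).erase q with hSdef
  have hqp : q ∈ Gi.erase p := Finset.mem_erase.mpr ⟨hpq.symm, hq⟩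
  have hScard : S.card = 2 * n - 2 := by
    rw [hSdef, Finset.card_erase_of_mem hqp, Finset.card_erase_of_mem hp, hcard]
    omega
  have hSsub : ∀ {s : Fin (6 * n)}, s ∈ S → s ∈ Gi ∧ s ≠ p ∧ s ≠ q := by
    intro s hs
    simp only [hSdef, Finset.mem_erase] at hs
    exact ⟨hs.2.2, hs.2.1, hs.1⟩
  set e : Fin (2 * n - 2) → {x // x ∈ S} :=
    fun k => S.equivFin.symm (Fin.cast hScard.symm k) with he
  have einj : Function.Injective e := by
    intro a b h
    exact Fin.cast_injective hScard.symm (S.equivFin.symm.injective h)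
  have eS : ∀ k, (↑(e k) : Fin (6 * n)) ∈ S := fun k => (e k).2
  have hb : ∀ (i : Fin n) (b : Bool), (i : ℕ) ≠ n - 1 →
      2 * (i : ℕ) + b.toNat < 2 * n - 2 := by
    intro i b hi
    have := i.isLt
    cases b <;> simp only [Bool.toNat_true, Bool.toNat_false] <;> omega
  set f : Option (Fin n × Bool) → Fin (6 * n) := fun u =>
    u.elim p (fun x =>
      if h : (x.1 : ℕ) = n - 1 then cond x.2 v q
      else ↑(e ⟨2 * (x.1 : ℕ) + x.2.toNat, hb x.1 x.2 h⟩)) with hf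
  have hvnep : v ≠ p := hvp.ne
  have hvneq : v ≠ q := hvq.ne
  have hvS : ∀ k, v ≠ ↑(e k) := fun k hh => hv (hh ▸ (hSsub (eS k)).1)
  have hqS : ∀ k, q ≠ ↑(e k) := fun k hh => (hSsub (eS k)).2.2 hh.symm
  have hpS : ∀ k, p ≠ ↑(e k) := fun k hh => (hSsub (eS k)).2.1 hh.symm
  have emk : ∀ {a b : ℕ} {ha : a < 2 * n - 2} {hb' : b < 2 * n - 2},
      (↑(e ⟨a, ha⟩) : Fin (6 * n)) = ↑(e ⟨b, hb'⟩) → a = b := by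
    intro a b ha hb' hh
    simpa using congrArg Fin.val (einj (Subtype.ext hh))
  have cliq : ∀ {a b : Fin (6 * n)}, a ∈ Gi → b ∈ Gi → a ≠ b → R.Adj a b := by
    intro a b ha hb' hab
    exact hclique (Finset.mem_coe.mpr ha) (Finset.mem_coe.mpr hb') hab
  have finj : Function.Injective f := by
    intro u u' h
    rcases u with _ | ⟨i, b⟩ <;> rcases u' with _ | ⟨i', b'⟩
    · rfl
    · exfalso
      cases b' <;>
        simp only [hf, Option.elim, Bool.cond_true, Bool.cond_false,
          Bool.toNat_true, Bool.toNat_false] at h <;>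
        split_ifs at h with h1
      · exact hpq h
      · exact hpS _ h
      · exact hvnep h.symm
      · exact hpS _ h
    · exfalso
      cases b <;>
        simp only [hf, Option.elim, Bool.cond_true, Bool.cond_false,
          Bool.toNat_true, Bool.toNat_false] at h <;>
        split_ifs at h with h1
      · exact hpq h.symm
      · exact hpS _ h.symm
      · exact hvnep h
      · exact hpS _ h.symm
    · cases b <;> cases b' <;>
        simp only [hf, Option.elim, Bool.cond_true, Bool.cond_false,
          Bool.toNat_true, Bool.toNat_false] at h <;>
        split_ifs at h with h1 h2
      all_goals first
        | (exact absurd h hvneq)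
        | (exact absurd h.symm hvneq)
        | (exact absurd h (hvS _))
        | (exact absurd h.symm (hvS _))
        | (exact absurd h (hqS _))
        | (exact absurd h.symm (hqS _))
        | (exact absurd (emk h) (by omega))
        | (have hii : i = i' := Fin.ext (by omega)
           simp [hii])
        | (have hx := emk h
           have hii : i = i' := Fin.ext (by omega)
           simp [hii])
  refine ⟨⟨f, finj⟩, ?_⟩
  rintro u u' ⟨hne, hcase⟩
  simp only [Function.Embedding.coeFn_mk]
  rcases u with _ | ⟨i, b⟩ <;> rcases u' with _ | ⟨i', b'⟩
  · exact absurd rfl hne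
  · -- center to leaf
    cases b' <;>
      simp only [hf, Option.elim, Bool.cond_true, Bool.cond_false,
        Bool.toNat_true, Bool.toNat_false] <;>
      split_ifs with h1
    · exact cliq hp hq hpq
    · exact cliq hp (hSsub (eS _)).1 (fun hh => hpS _ hh)
    · exact hvp.symm
    · exact cliq hp (hSsub (eS _)).1 (fun hh => hpS _ hh)
  · -- leaf to center
    cases b <;>
      simp only [hf, Option.elim, Bool.cond_true, Bool.cond_false,
        Bool.toNat_true, Bool.toNat_false] <;>
      split_ifs with h1
    · exact (cliq hp hq hpq).symm
    · exact (cliq hp (hSsub (eS _)).1 (fun hh => hpS _ hh)).symm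
    · exact hvp
    · exact (cliq hp (hSsub (eS _)).1 (fun hh => hpS _ hh)).symm
  · -- leaf to leaf on the same edge
    have hii : i = i' := by
      rcases hcase with h | h | ⟨j, c, d, h1, h2⟩
      · simp at h
      · simp at h
      · simp only [Option.some.injEq, Prod.mk.injEq] at h1 h2
        rw [h1.1, h2.1]
    subst hii
    have hbb : b ≠ b' := fun hh => hne (by rw [hh])
    cases b <;> cases b' <;>
      simp only [hf, Option.elim, Bool.cond_true, Bool.cond_false,
        Bool.toNat_true, Bool.toNat_false]
    · exact absurd rfl hbb
    · split_ifs with h1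
      · exact hvq.symm
      · refine cliq (hSsub (eS _)).1 (hSsub (eS _)).1 (fun hh => ?_)
        exact absurd (emk hh) (by omega)
    · split_ifs with h1
      · exact hvq
      · refine cliq (hSsub (eS _)).1 (hSsub (eS _)).1 (fun hh => ?_)
        exact absurd (emk hh) (by omega)
    · exact absurd rfl hbb

/-- Let `K_{6n}` carry an `(Fₙ, K₄)`-free coloring partitioned into three red
cliques `G 0, G 1, G 2` of order `2n`, and extend it by a new vertex `w` with red
neighbors `RedN` and blue neighbors `BlueN`, still `(Fₙ, K₄)`-free. Then there is
no permutation `σ` of the parts such that `w` has at least `1` blue neighbor in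
`G (σ 0)`, at least `2` in `G (σ 1)` and at least `3` in `G (σ 2)`. -/
theorem no_one_two_three_blue (n : ℕ) (hn : 4 ≤ n)
    (R : SimpleGraph (Fin (6 * n)))
    (hfree : ¬ ContainsFan R n ∧ ¬ ContainsK4 Rᶜ)
    (G : Fin 3 → Finset (Fin (6 * n)))
    (hcard : ∀ i, (G i).card = 2 * n)
    (hdisj : ∀ i j, i ≠ j → Disjoint (G i) (G j))
    (hcover : ∀ v, ∃ i, v ∈ G i)
    (hclique : ∀ i, R.IsClique ↑(G i))
    (RedN BlueN : Finset (Fin (6 * n))) (hdisjN : Disjoint RedN BlueN)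
    (hfree' : ¬ ContainsFan (extendGraph R ↑RedN) n ∧
      ¬ ContainsK4 (extendGraph Rᶜ ↑BlueN)) :
    ¬ ∃ σ : Equiv.Perm (Fin 3),
      1 ≤ (BlueN ∩ G (σ 0)).card ∧
      2 ≤ (BlueN ∩ G (σ 1)).card ∧
      3 ≤ (BlueN ∩ G (σ 2)).card := by
  rintro ⟨σ, h1, h2, h3⟩
  classical
  -- any vertex outside a part has at most one red neighbor in it
  have atMostOne : ∀ (i : Fin 3) (v p q : Fin (6 * n)), v ∉ G i → p ∈ G i → q ∈ G i →
      p ≠ q → R.Adj v p → R.Adj v q → False := by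
    intro i v p q hv hp hq hpq hvp hvq
    exact hfree.1 (two_red_nbrs_fan hn R (G i) (hcard i) (hclique i) v p q hv hp hq hpq hvp hvq)
  -- no blue triangle among the blue neighbors of `w`
  have noBlueTri : ∀ x y z : Fin (6 * n), x ∈ BlueN → y ∈ BlueN → z ∈ BlueN →
      x ≠ y → x ≠ z → y ≠ z → R.Adj x y ∨ R.Adj x z ∨ R.Adj y z := by
    intro x y z hx hy hz hxy hxz hyz
    by_contra hcon
    push_neg at hcon
    obtain ⟨c1, c2, c3⟩ := hcon
    refine hfree'.2 ⟨none, some x, some y, some z, ?_, ?_, ?_, ?_, ?_, ?_⟩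
    · exact Finset.mem_coe.mpr hx
    · exact Finset.mem_coe.mpr hy
    · exact Finset.mem_coe.mpr hz
    · exact Rᶜ.adj_symm (Rᶜ.adj_symm ((R.compl_adj x y).mpr ⟨hxy, c1⟩))
    · exact (R.compl_adj x z).mpr ⟨hxz, c2⟩
    · exact (R.compl_adj y z).mpr ⟨hyz, c3⟩
  -- part indices are distinct
  have s01 : σ 0 ≠ σ 1 := fun h => absurd (σ.injective h) (by decide)
  have s02 : σ 0 ≠ σ 2 := fun h => absurd (σ.injective h) (by decide)
  have s12 : σ 1 ≠ σ 2 := fun h => absurd (σ.injective h) (by decide)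
  -- extract the blue neighbors
  obtain ⟨x, hx⟩ := Finset.card_pos.mp (lt_of_lt_of_le one_pos h1)
  obtain ⟨y1, hy1, y2, hy2, hy12⟩ := Finset.one_lt_card.mp (lt_of_lt_of_le one_lt_two h2)
  obtain ⟨z1, hz1, z2, hz2, z3, hz3, hz12, hz13, hz23⟩ :=
    Finset.two_lt_card.mp (lt_of_lt_of_le (by norm_num) h3)
  rw [Finset.mem_inter] at hx hy1 hy2 hz1 hz2 hz3
  -- cross-part distinctness
  have distXY : ∀ {a b : Fin (6 * n)}, a ∈ G (σ 0) → b ∈ G (σ 1) → a ≠ b :=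
    fun ha hb hh => Finset.disjoint_left.mp (hdisj _ _ s01) ha (hh ▸ hb)
  have distXZ : ∀ {a b : Fin (6 * n)}, a ∈ G (σ 0) → b ∈ G (σ 2) → a ≠ b :=
    fun ha hb hh => Finset.disjoint_left.mp (hdisj _ _ s02) ha (hh ▸ hb)
  have distYZ : ∀ {a b : Fin (6 * n)}, a ∈ G (σ 1) → b ∈ G (σ 2) → a ≠ b :=
    fun ha hb hh => Finset.disjoint_left.mp (hdisj _ _ s12) ha (hh ▸ hb)
  have hxny1 : x ∉ G (σ 1) := fun hh => distXY hx.2 hh rfl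
  have hxnz : x ∉ G (σ 2) := fun hh => distXZ hx.2 hh rfl
  -- choose y among y1, y2 with x-y not red
  have hy : ∃ y, y ∈ BlueN ∧ y ∈ G (σ 1) ∧ ¬ R.Adj x y := by
    by_cases hcase : R.Adj x y1
    · refine ⟨y2, hy2.1, hy2.2, fun hh => ?_⟩
      exact atMostOne (σ 1) x y1 y2 hxny1 hy1.2 hy2.2 hy12 hcase hh
    · exact ⟨y1, hy1.1, hy1.2, hcase⟩
  obtain ⟨y, hyB, hyG, hxy⟩ := hy
  have hynz : y ∉ G (σ 2) := fun hh => distYZ hyG hh rfl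
  -- key step: two z's both blue to x force two red neighbors of y in G (σ 2)
  have key : ∀ z z' : Fin (6 * n), z ∈ BlueN → z ∈ G (σ 2) → z' ∈ BlueN → z' ∈ G (σ 2) →
      z ≠ z' → ¬ R.Adj x z → ¬ R.Adj x z' → False := by
    intro z z' hzB hzG hz'B hz'G hzz' hxz hxz'
    have hyz : R.Adj y z := by
      rcases noBlueTri x y z hx.1 hyB hzB (distXY hx.2 hyG) (distXZ hx.2 hzG)
        (distYZ hyG hzG) with h | h | h
      · exact absurd h hxy
      · exact absurd h hxz
      · exact h
    have hyz' : R.Adj y z' := by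
      rcases noBlueTri x y z' hx.1 hyB hz'B (distXY hx.2 hyG) (distXZ hx.2 hz'G)
        (distYZ hyG hz'G) with h | h | h
      · exact absurd h hxy
      · exact absurd h hxz'
      · exact h
    exact atMostOne (σ 2) y z z' hynz hzG hz'G hzz' hyz hyz'
  -- x is red to at most one of z1, z2, z3
  by_cases c1 : R.Adj x z1
  · by_cases c2 : R.Adj x z2
    · exact atMostOne (σ 2) x z1 z2 hxnz hz1.2 hz2.2 hz12 c1 c2
    · by_cases c3 : R.Adj x z3
      · exact atMostOne (σ 2) x z1 z3 hxnz hz1.2 hz3.2 hz13 c1 c3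
      · exact key z2 z3 hz2.1 hz2.2 hz3.1 hz3.2 hz23 c2 c3
  · by_cases c2 : R.Adj x z2
    · by_cases c3 : R.Adj x z3
      · exact atMostOne (σ 2) x z2 z3 hxnz hz2.2 hz3.2 hz23 c2 c3
      · exact key z1 z3 hz1.1 hz1.2 hz3.1 hz3.2 hz13 c1 c3
    · exact key z1 z2 hz1.1 hz1.2 hz2.1 hz2.2 hz12 c1 c2
end

section
/- Let n ≥ 4 be an integer and let K_{6n} be given a red/blue edge-coloring that is (F_n, K_4)-free whose red subgraph contains three pairwise disjoint red cliques covering all vertices, each of order 2n, on parts A_1, A_2, A_3. Then all edges inside each A_i are red, and the blue subgraph is obtained from the complete tripartite graph K_{2n,2n,2n} on parts A_1, A_2, A_3 by deleting the edges of a (possibly empty) matching I_1 between A_1 and A_2, a matching I_2 between A_2 and A_3, and a matching I_3 between A_3 and A_1 (these deleted edges being red), where the red edges of I_1 ∪ I_2 ∪ I_3 contain no triangle. -/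
open SimpleGraph

lemma fan_of {n : ℕ} (hn : 1 ≤ n) {V : Type*} [DecidableEq V] (R : SimpleGraph V)
    (S : Finset V) (hS : S.card = 2 * n) (hclq : R.IsClique ↑S)
    {u v v' : V} (hu : u ∈ S) (hv : v ∉ S) (hv' : v' ∉ S) (hvv : v ≠ v')
    (h1 : R.Adj u v) (h2 : R.Adj u v') (h3 : R.Adj v v') :
    ContainsFan R n := by
  classical
  set T := S.erase u with hTdef
  have hT : T.card = 2 * n - 1 := by
    rw [hTdef, Finset.card_erase_of_mem hu, hS]
  set g : Fin (2 * n - 1) → V := fun k => ((T.equivFin.symm (Fin.cast hT.symm k)) : V)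
    with hgdef
  have hgT : ∀ k, g k ∈ T := fun k => (T.equivFin.symm _).2
  have hgS : ∀ k, g k ∈ S := fun k => Finset.mem_of_mem_erase (hgT k)
  have hgu : ∀ k, g k ≠ u := fun k => Finset.ne_of_mem_erase (hgT k)
  have hginj : Function.Injective g := by
    intro k k' h
    have h2' := T.equivFin.symm.injective (Subtype.coe_injective h)
    have h3' : (k : ℕ) = k' := by
      have := congrArg Fin.val h2'
      simpa using this
    exact Fin.ext h3'
  have hbnd : ∀ (i : Fin n) (a : Bool), (i : ℕ) + 1 < n →
      2 * (i : ℕ) + a.toNat < 2 * n - 1 := by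
    intro i a h
    have : a.toNat ≤ 1 := Bool.toNat_le a
    omega
  set f0 : Option (Fin n × Bool) → V := fun w =>
    match w with
    | none => u
    | some (i, a) =>
      if h : (i : ℕ) + 1 < n then g ⟨2 * (i : ℕ) + a.toNat, hbnd i a h⟩
      else if a then v' else v
    with hf0def
  have hne_uv : u ≠ v := h1.ne
  have hne_uv' : u ≠ v' := h2.ne
  have finj : Function.Injective f0 := by
    rintro (_ | ⟨i, a⟩) (_ | ⟨j, b⟩) hww
    · rfl
    · exfalso
      simp only [hf0def] at hww
      by_cases h : (j : ℕ) + 1 < n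
      · rw [dif_pos h] at hww
        exact hgu _ hww.symm
      · rw [dif_neg h] at hww
        cases b <;> simp_all
    · exfalso
      simp only [hf0def] at hww
      by_cases h : (i : ℕ) + 1 < n
      · rw [dif_pos h] at hww
        exact hgu _ hww
      · rw [dif_neg h] at hww
        cases a <;> simp_all
    · simp only [hf0def] at hww
      by_cases h : (i : ℕ) + 1 < n <;> by_cases h' : (j : ℕ) + 1 < n
      · rw [dif_pos h, dif_pos h'] at hww
        have hk := congrArg Fin.val (hginj hww)
        simp only at hk
        have hiab : (i : ℕ) = (j : ℕ) ∧ a = b := by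
          cases a <;> cases b <;> simp [Bool.toNat] at hk ⊢ <;> omega
        simp [Prod.ext_iff, Fin.ext_iff, hiab.1, hiab.2]
      · exfalso
        rw [dif_pos h, dif_neg h'] at hww
        cases b
        · simp only [Bool.false_eq_true, if_false] at hww
          exact hv (by rw [← hww]; exact hgS _)
        · simp only [if_true] at hww
          exact hv' (by rw [← hww]; exact hgS _)
      · exfalso
        rw [dif_neg h, dif_pos h'] at hww
        cases a
        · simp only [Bool.false_eq_true, if_false] at hww
          exact hv (by rw [hww]; exact hgS _)
        · simp only [if_true] at hww
          exact hv' (by rw [hww]; exact hgS _)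
      · have hij : (i : ℕ) = (j : ℕ) := by
          have := i.isLt; have := j.isLt; omega
        have hab : a = b := by
          rw [dif_neg h, dif_neg h'] at hww
          cases a <;> cases b <;> simp_all
        simp [Prod.ext_iff, Fin.ext_iff, hij, hab]
  have hcenter : ∀ (i : Fin n) (a : Bool), R.Adj u (f0 (some (i, a))) := by
    intro i a
    simp only [hf0def]
    by_cases h : (i : ℕ) + 1 < n
    · rw [dif_pos h]
      exact hclq hu (hgS _) (Ne.symm (hgu _))
    · rw [dif_neg h]
      cases a
      · simpa using h1
      · simpa using h2
  refine ⟨⟨f0, finj⟩, ?_⟩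
  rintro w w' ⟨hne, hcase⟩
  rcases hcase with rfl | rfl | ⟨i, a, b, rfl, rfl⟩
  · rcases w' with _ | ⟨i, a⟩
    · exact absurd rfl hne
    · exact hcenter i a
  · rcases w with _ | ⟨i, a⟩
    · exact absurd rfl hne
    · exact (hcenter i a).symm
  · have hab : a ≠ b := by rintro rfl; exact hne rfl
    show R.Adj (f0 (some (i, a))) (f0 (some (i, b)))
    simp only [hf0def]
    by_cases h : (i : ℕ) + 1 < n
    · rw [dif_pos h, dif_pos h]
      refine hclq (hgS _) (hgS _) ?_
      intro hgg
      have hk := congrArg Fin.val (hginj hgg)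
      simp only at hk
      cases a <;> cases b <;> simp_all [Bool.toNat]
    · rw [dif_neg h, dif_neg h]
      cases a <;> cases b
      · exact absurd rfl hab
      · simpa using h3
      · simpa using h3.symm
      · exact absurd rfl hab

/-- Structure of `(Fₙ, K₄)`-free colorings of `K_{6n}` whose red subgraph contains a
spanning `3K_{2n}` on parts `A 0, A 1, A 2`: all edges inside each part are red, the
red edges between any two distinct parts form a matching (the deleted edges of the
blue complete tripartite graph `K_{2n,2n,2n}`), these cross red edges contain no
triangle, and the blue subgraph consists exactly of the cross pairs that are not
red. -/
theorem structure_of_free_colorings (n : ℕ) (hn : 4 ≤ n)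
    (R : SimpleGraph (Fin (6 * n)))
    (hfree : ¬ ContainsFan R n ∧ ¬ ContainsK4 Rᶜ)
    (A : Fin 3 → Finset (Fin (6 * n)))
    (hcard : ∀ i, (A i).card = 2 * n)
    (hdisj : ∀ i j, i ≠ j → Disjoint (A i) (A j))
    (hcover : ∀ v, ∃ i, v ∈ A i)
    (hclique : ∀ i, R.IsClique ↑(A i)) :
    (∀ i, ∀ u ∈ A i, ∀ v ∈ A i, u ≠ v → R.Adj u v) ∧
    (∀ i j, i ≠ j → ∀ u ∈ A i, ∀ v ∈ A j, ∀ u' ∈ A i, ∀ v' ∈ A j,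
      R.Adj u v → R.Adj u' v' → (u = u' ↔ v = v')) ∧
    (¬ ∃ (a b c : Fin (6 * n)) (i j k : Fin 3), i ≠ j ∧ j ≠ k ∧ i ≠ k ∧
      a ∈ A i ∧ b ∈ A j ∧ c ∈ A k ∧ R.Adj a b ∧ R.Adj b c ∧ R.Adj a c) ∧
    (∀ u v : Fin (6 * n), Rᶜ.Adj u v ↔
      (∃ i j, i ≠ j ∧ u ∈ A i ∧ v ∈ A j) ∧ ¬ R.Adj u v) := by
  obtain ⟨hfan, -⟩ := hfree
  have hn1 : 1 ≤ n := by omega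
  have key : ∀ (i : Fin 3) (u v v' : Fin (6 * n)), u ∈ A i → v ∉ A i → v' ∉ A i →
      v ≠ v' → R.Adj u v → R.Adj u v' → R.Adj v v' → False :=
    fun i u v v' hu hv hv' hne ha hb hc =>
      hfan (fan_of hn1 R (A i) (hcard i) (hclique i) hu hv hv' hne ha hb hc)
  have notin : ∀ i j : Fin 3, i ≠ j → ∀ v ∈ A j, v ∉ A i :=
    fun i j hij v hv hvi => Finset.disjoint_left.mp (hdisj i j hij) hvi hv
  refine ⟨fun i u hu v hv hne => hclique i hu hv hne, ?_, ?_, ?_⟩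
  · intro i j hij u hu v hv u' hu' v' hv' huv hu'v'
    constructor
    · rintro rfl
      by_contra hvne
      exact key i u v v' hu (notin i j hij v hv) (notin i j hij v' hv') hvne huv hu'v'
        (hclique j hv hv' hvne)
    · rintro rfl
      by_contra hune
      exact key j v u u' hv (notin j i (Ne.symm hij) u hu) (notin j i (Ne.symm hij) u' hu')
        hune huv.symm hu'v'.symm (hclique i hu hu' hune)
  · rintro ⟨a, b, c, i, j, k, hij, hjk, hik, ha, hb, hc, hab, hbc, hac⟩
    exact key j b a c hb (notin j i (Ne.symm hij) a ha) (notin j k hjk c hc)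
      hac.ne hab.symm hbc hac
  · intro u v
    rw [compl_adj]
    constructor
    · rintro ⟨hne, hnadj⟩
      obtain ⟨i, hi⟩ := hcover u
      obtain ⟨j, hj⟩ := hcover v
      refine ⟨⟨i, j, ?_, hi, hj⟩, hnadj⟩
      rintro rfl
      exact hnadj (hclique i hi hj hne)
    · rintro ⟨⟨i, j, hij, hi, hj⟩, hnadj⟩
      exact ⟨fun h => Finset.disjoint_left.mp (hdisj i j hij) hi (h ▸ hj), hnadj⟩
end
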